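/- arXiv:1107.3365 — 5 statements merged into one kernel-verified Lean document; each statement's English description precedes it below -/
import Mathlib

section
/- Let X_1, X_2, … be a sequence of real-valued random variables, and suppose there are constants A > 0, a > 0, b ≥ 0 and γ ∈ (0,2) such that for all integers m ≥ 0, n ≥ 1 and all reals t ≥ 0, P{|S(m+1, m+n)| > t} ≤ A·exp(−a t² / (n + b t^γ)). Then for every 0 < c < a there exists a constant C > 0 (depending only on A, a, b, γ and c) such that for all integers n ≥ 1, m ≥ 0 and all reals t ≥ 0, P{M(m+1, m+n) > t} ≤ C·exp(−c t² / (n + b t^γ)). -/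
set_option maxHeartbeats 1000000

open MeasureTheory Finset

private lemma aux_rpow_le_exp {y q : ℝ} (hy : 0 ≤ y) (hq : 0 < q) :
    y ^ q ≤ q ^ q * Real.exp y := by
  have h1 : y ^ q = q ^ q * (y / q) ^ q := by
    rw [← Real.mul_rpow hq.le (by positivity)]
    congr 1
    field_simp
  have h2 : (y / q) ^ q ≤ (Real.exp (y / q)) ^ q :=
    Real.rpow_le_rpow (by positivity) (by linarith [Real.add_one_le_exp (y / q)]) hq.le
  have h3 : (Real.exp (y / q)) ^ q = Real.exp y := by
    rw [Real.rpow_def_of_pos (Real.exp_pos _), Real.log_exp]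
    congr 1
    field_simp
  rw [h1, ← h3]
  exact mul_le_mul_of_nonneg_left h2 (by positivity)

private lemma aux_regime2 (a b γ c θ : ℝ) (ha : 0 < a) (hb : 0 ≤ b)
    (hγ0 : 0 < γ) (hγ2 : γ < 2) (hc : 0 < c) (hca : c < a) (hθ0 : 0 < θ) :
    ∃ K' : ℝ, 0 ≤ K' ∧ ∀ (n : ℕ) (t : ℝ), 0 < t → θ * n ≤ b * t ^ γ →
      (n : ℝ) ≤ K' * Real.exp ((a - c) * (t ^ 2 / ((n : ℝ) + b * t ^ γ))) := by
  have hac : 0 < a - c := by linarith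
  have hq'0 : 0 < γ / (2 - γ) := div_pos hγ0 (by linarith)
  set q' : ℝ := γ / (2 - γ) with hq'def
  have hbase0 : 0 ≤ q' * (1 + θ) * b / (θ * (a - c)) := by
    apply div_nonneg (by positivity)
    positivity
  have hK'0 : 0 ≤ (b / θ) * ((q' * (1 + θ) * b / (θ * (a - c))) ^ q') :=
    mul_nonneg (div_nonneg hb hθ0.le) (Real.rpow_nonneg hbase0 _)
  refine ⟨(b / θ) * ((q' * (1 + θ) * b / (θ * (a - c))) ^ q'), hK'0, ?_⟩
  intro n t htpos hreg
  rcases Nat.eq_zero_or_pos n with hn0 | hn1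
  · subst hn0
    simp only [Nat.cast_zero]
    exact mul_nonneg hK'0 (Real.exp_pos _).le
  have hbpos : 0 < b := by
    rcases lt_or_eq_of_le hb with h | h
    · exact h
    · exfalso
      rw [← h, zero_mul] at hreg
      have : (0 : ℝ) < θ * n := by
        have : (1:ℝ) ≤ (n:ℝ) := by exact_mod_cast hn1
        nlinarith
      linarith
  have htγpos : 0 < t ^ γ := Real.rpow_pos_of_pos htpos _
  have hn1' : (1 : ℝ) ≤ (n : ℝ) := by exact_mod_cast hn1
  have hD0 : 0 < (n : ℝ) + b * t ^ γ := by positivity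
  set β : ℝ := θ / ((1 + θ) * b) with hβdef
  have hβ0 : 0 < β := by positivity
  set T : ℝ := t ^ 2 / ((n : ℝ) + b * t ^ γ) with hTdef
  have hDle : (n : ℝ) + b * t ^ γ ≤ t ^ γ / β := by
    have h1 : (n : ℝ) ≤ b * t ^ γ / θ := by
      rw [le_div_iff₀ hθ0]; linarith [hreg]
    have h2 : t ^ γ / β = b * t ^ γ / θ + b * t ^ γ := by
      rw [hβdef]; field_simp
    linarith
  have ht2γ : t ^ ((2 : ℝ) - γ) = t ^ 2 / t ^ γ := by
    rw [Real.rpow_sub htpos]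
    norm_num [Real.rpow_natCast]
  set y : ℝ := (a - c) * β * t ^ ((2 : ℝ) - γ) with hydef
  have hy0 : 0 ≤ y := by
    have h := Real.rpow_nonneg htpos.le ((2:ℝ) - γ)
    rw [hydef]
    exact mul_nonneg (mul_nonneg hac.le hβ0.le) h
  have hyT : y ≤ (a - c) * T := by
    have key : t ^ 2 / (t ^ γ / β) ≤ T := by
      rw [hTdef]
      gcongr
    have key2 : t ^ 2 / (t ^ γ / β) = β * (t ^ 2 / t ^ γ) := by
      field_simp
    rw [hydef, ht2γ]
    calc (a - c) * β * (t ^ 2 / t ^ γ) = (a - c) * (β * (t ^ 2 / t ^ γ)) := by ring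
      _ ≤ (a - c) * T := by
          apply mul_le_mul_of_nonneg_left _ hac.le
          rw [← key2]; exact key
  set Pq : ℝ := ((a - c) * β) ^ q' with hPqdef
  have hPq0 : 0 < Pq := Real.rpow_pos_of_pos (by positivity) _
  have hyq : y ^ q' = Pq * t ^ γ := by
    rw [hydef, hPqdef, Real.mul_rpow (by positivity) (Real.rpow_nonneg htpos.le _)]
    congr 1
    rw [← Real.rpow_mul htpos.le]
    congr 1
    rw [hq'def]
    field_simp [(ne_of_gt (by linarith : (0:ℝ) < 2 - γ))]
  have htγ_eq : t ^ γ = y ^ q' / Pq := by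
    rw [hyq]; field_simp
  have hnle : (n : ℝ) ≤ (b / θ) * t ^ γ := by
    rw [div_mul_eq_mul_div, le_div_iff₀ hθ0]
    linarith [hreg]
  have hbase_eq : (q' * (1 + θ) * b / (θ * (a - c))) ^ q' = q' ^ q' / Pq := by
    rw [hPqdef, ← Real.div_rpow hq'0.le (by positivity)]
    congr 1
    rw [hβdef]
    field_simp
  calc (n : ℝ) ≤ (b / θ) * t ^ γ := hnle
    _ = (b / θ) * (y ^ q' / Pq) := by rw [htγ_eq]
    _ ≤ (b / θ) * ((q' ^ q' * Real.exp y) / Pq) := by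
        gcongr
        exact aux_rpow_le_exp hy0 hq'0
    _ ≤ (b / θ) * ((q' ^ q' * Real.exp ((a - c) * T)) / Pq) := by
        gcongr
    _ = ((b / θ) * (q' ^ q' / Pq)) * Real.exp ((a - c) * T) := by ring
    _ = ((b / θ) * ((q' * (1 + θ) * b / (θ * (a - c))) ^ q')) * Real.exp ((a - c) * T) := by
        rw [hbase_eq]

/-- **Maximal Bernstein inequality** (Kevei–Mason, Theorem 1).
If the partial sums `S(m+1, m+n) = ∑_{i=m+1}^{m+n} X i` of a sequence of real random
variables satisfy a generalized Bernstein-type inequality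
`P{|S(m+1, m+n)| > t} ≤ A · exp(−a t² / (n + b t^γ))`,
then for every `0 < c < a` there is a constant `C > 0` such that the maximum
`M(m+1, m+n) = max_{m+1 ≤ j ≤ m+n} |S(m+1, j)|` satisfies
`P{M(m+1, m+n) > t} ≤ C · exp(−c t² / (n + b t^γ))`. -/
theorem maximal_bernstein
    {Ω : Type*} [MeasurableSpace Ω] (P : Measure Ω) [IsProbabilityMeasure P]
    (X : ℕ → Ω → ℝ) (A a b γ : ℝ)
    (hA : 0 < A) (ha : 0 < a) (hb : 0 ≤ b) (hγ : γ ∈ Set.Ioo (0 : ℝ) 2)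
    (hBern : ∀ (m n : ℕ), 1 ≤ n → ∀ t : ℝ, 0 ≤ t →
      P {ω | t < |∑ i ∈ Finset.Icc (m + 1) (m + n), X i ω|}
        ≤ ENNReal.ofReal (A * Real.exp (-(a * t ^ 2) / (n + b * t ^ γ)))) :
    ∀ c : ℝ, 0 < c → c < a → ∃ C : ℝ, 0 < C ∧
      ∀ (m n : ℕ) (hn : 1 ≤ n), ∀ t : ℝ, 0 ≤ t →
        P {ω | t < (Finset.Icc (m + 1) (m + n)).sup'
              (Finset.nonempty_Icc.mpr (by omega))
              (fun j => |∑ i ∈ Finset.Icc (m + 1) j, X i ω|)}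
          ≤ ENNReal.ofReal (C * Real.exp (-(c * t ^ 2) / (n + b * t ^ γ))) := by
  intro c hc hca
  obtain ⟨hγ0, hγ2⟩ := hγ
  -- ε, κ
  obtain ⟨ε, hε0, hε1, κ, hκ0, hεκ⟩ :
      ∃ ε : ℝ, 0 < ε ∧ ε < 1 ∧ ∃ κ : ℝ, 0 < κ ∧ a * (1 - ε) ^ 2 = c + κ := by
    have hfrac_pos : 0 < (a + c) / (2 * a) := by positivity
    have hfrac_lt1 : (a + c) / (2 * a) < 1 := by
      rw [div_lt_one (by linarith)]; linarith
    have hrpos : 0 < Real.sqrt ((a + c) / (2 * a)) := Real.sqrt_pos.mpr hfrac_pos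
    have hr2 : Real.sqrt ((a + c) / (2 * a)) ^ 2 = (a + c) / (2 * a) :=
      Real.sq_sqrt hfrac_pos.le
    have hrlt1 : Real.sqrt ((a + c) / (2 * a)) < 1 := by nlinarith
    refine ⟨1 - Real.sqrt ((a + c) / (2 * a)), by linarith, by linarith,
      (a - c) / 2, by linarith, ?_⟩
    have h1 : (1 : ℝ) - (1 - Real.sqrt ((a + c) / (2 * a))) = Real.sqrt ((a + c) / (2 * a)) := by
      ring
    rw [h1, hr2]
    field_simp
    ring
  -- θ
  obtain ⟨θ, hθ0, hθ9, hθε⟩ : ∃ θ : ℝ, 0 < θ ∧ θ < 1 / 9 ∧ ε ^ 2 = 9 * θ := by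
    refine ⟨ε ^ 2 / 9, by positivity, by nlinarith, by ring⟩
  -- u0
  set L : ℝ := Real.log (3 * (A + 3)) with hLdef
  have hlog3pos : 0 < Real.log 3 := Real.log_pos (by norm_num)
  have hL3 : Real.log 3 ≤ L := by
    apply Real.log_le_log (by norm_num); nlinarith
  have hL0 : 0 < L := lt_of_lt_of_le hlog3pos hL3
  obtain ⟨u0, hu0pos, hcθu0, hκu0, h2cu0⟩ :
      ∃ u0 : ℝ, 0 < u0 ∧ Real.log 3 ≤ c * θ * u0 ∧ L ≤ κ * u0 ∧ Real.log 3 ≤ 2 * c * u0 := by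
    refine ⟨Real.log 3 / (c * θ) + L / κ + Real.log 3 / (2 * c), by positivity, ?_, ?_, ?_⟩
    · have h1 : c * θ * (Real.log 3 / (c * θ)) = Real.log 3 := by field_simp
      nlinarith [mul_pos hc hθ0, div_nonneg hL0.le hκ0.le,
        div_nonneg hlog3pos.le (by linarith : (0:ℝ) ≤ 2 * c)]
    · have h1 : κ * (L / κ) = L := by field_simp
      nlinarith [div_nonneg hlog3pos.le (mul_pos hc hθ0).le,
        div_nonneg hlog3pos.le (by linarith : (0:ℝ) ≤ 2 * c)]
    · have h1 : 2 * c * (Real.log 3 / (2 * c)) = Real.log 3 := by field_simp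
      nlinarith [div_nonneg hlog3pos.le (mul_pos hc hθ0).le, div_nonneg hL0.le hκ0.le]
  -- K'
  obtain ⟨K', hK'0, hK'⟩ := aux_regime2 a b γ c θ ha hb hγ0 hγ2 hc hca hθ0
  -- C
  set C : ℝ := Real.exp (c * u0) + A / θ + A * K' + A + 1 with hCdef
  have hexp0 : 0 < Real.exp (c * u0) := Real.exp_pos _
  have hAθ0 : 0 ≤ A / θ := by positivity
  have hAK0 : 0 ≤ A * K' := mul_nonneg hA.le hK'0
  have hCpos : 0 < C := by rw [hCdef]; nlinarith
  have hC1 : 1 ≤ C := by rw [hCdef]; nlinarith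
  have hCe : Real.exp (c * u0) ≤ C := by rw [hCdef]; nlinarith
  have hCAθ : A / θ ≤ C := by rw [hCdef]; nlinarith
  have hCAK : A * K' ≤ C := by rw [hCdef]; nlinarith
  refine ⟨C, hCpos, ?_⟩
  -- union bound lemma
  have UB : ∀ (m n : ℕ) (hn : 1 ≤ n), ∀ t : ℝ, 0 ≤ t →
      P {ω | t < (Finset.Icc (m + 1) (m + n)).sup'
            (Finset.nonempty_Icc.mpr (by omega))
            (fun j => |∑ i ∈ Finset.Icc (m + 1) j, X i ω|)}
        ≤ ENNReal.ofReal ((n : ℝ) * (A * Real.exp (-(a * t ^ 2) / (n + b * t ^ γ)))) := by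
    intro m n hn t ht
    have hset : {ω | t < (Finset.Icc (m + 1) (m + n)).sup'
            (Finset.nonempty_Icc.mpr (by omega))
            (fun j => |∑ i ∈ Finset.Icc (m + 1) j, X i ω|)}
        = ⋃ j ∈ Finset.Icc (m + 1) (m + n), {ω | t < |∑ i ∈ Finset.Icc (m + 1) j, X i ω|} := by
      ext ω
      simp [Finset.lt_sup'_iff]
    rw [hset]
    refine le_trans (measure_biUnion_finset_le _ _) ?_
    have hterm : ∀ j ∈ Finset.Icc (m + 1) (m + n),
        P {ω | t < |∑ i ∈ Finset.Icc (m + 1) j, X i ω|}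
          ≤ ENNReal.ofReal (A * Real.exp (-(a * t ^ 2) / (n + b * t ^ γ))) := by
      intro j hj
      rw [Finset.mem_Icc] at hj
      obtain ⟨k, hk1, hkn, hjk⟩ : ∃ k, 1 ≤ k ∧ k ≤ n ∧ j = m + k :=
        ⟨j - m, by omega, by omega, by omega⟩
      subst hjk
      refine le_trans (hBern m k hk1 t ht) (ENNReal.ofReal_le_ofReal ?_)
      apply mul_le_mul_of_nonneg_left _ hA.le
      apply Real.exp_le_exp.mpr
      have htγ : 0 ≤ b * t ^ γ := mul_nonneg hb (Real.rpow_nonneg ht _)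
      have hd1 : 0 < (k : ℝ) + b * t ^ γ := by
        have : (1 : ℝ) ≤ (k : ℝ) := by exact_mod_cast hk1
        linarith
      have hd2 : (k : ℝ) + b * t ^ γ ≤ (n : ℝ) + b * t ^ γ := by
        have : (k : ℝ) ≤ (n : ℝ) := by exact_mod_cast hkn
        linarith
      rw [neg_div, neg_div, neg_le_neg_iff]
      exact div_le_div_of_nonneg_left (mul_nonneg ha.le (sq_nonneg t)) hd1 hd2
    refine le_trans (Finset.sum_le_sum hterm) ?_
    rw [Finset.sum_const, Nat.card_Icc]
    have hcard : m + n + 1 - (m + 1) = n := by omega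
    rw [hcard, nsmul_eq_mul]
    rw [← ENNReal.ofReal_natCast n, ← ENNReal.ofReal_mul (by positivity)]
  -- the main induction
  have KEY : ∀ n : ℕ, ∀ m : ℕ, ∀ hn : 1 ≤ n, ∀ t : ℝ, 0 ≤ t →
      P {ω | t < (Finset.Icc (m + 1) (m + n)).sup'
            (Finset.nonempty_Icc.mpr (by omega))
            (fun j => |∑ i ∈ Finset.Icc (m + 1) j, X i ω|)}
        ≤ ENNReal.ofReal (C * Real.exp (-(c * t ^ 2) / (n + b * t ^ γ))) := by
    intro n
    induction n using Nat.strong_induction_on with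
    | _ n ih =>
    intro m hn t ht
    have htγ0 : 0 ≤ b * t ^ γ := mul_nonneg hb (Real.rpow_nonneg ht _)
    have hn1 : (1 : ℝ) ≤ (n : ℝ) := by exact_mod_cast hn
    have hD0 : 0 < (n : ℝ) + b * t ^ γ := by linarith
    set T : ℝ := t ^ 2 / ((n : ℝ) + b * t ^ γ) with hTdef
    have hT0 : 0 ≤ T := by positivity
    have hrw : -(c * t ^ 2) / ((n : ℝ) + b * t ^ γ) = -(c * T) := by
      rw [hTdef]; field_simp
    by_cases hTu0 : T ≤ u0
    · -- trivial regime
      refine le_trans prob_le_one ?_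
      rw [← ENNReal.ofReal_one]
      apply ENNReal.ofReal_le_ofReal
      rw [hrw]
      have h1 : Real.exp (c * u0) * Real.exp (-(c * T)) ≤ C * Real.exp (-(c * T)) :=
        mul_le_mul_of_nonneg_right hCe (Real.exp_pos _).le
      rw [← Real.exp_add] at h1
      refine le_trans ?_ h1
      rw [← Real.exp_zero]
      apply Real.exp_le_exp.mpr
      have w1 : c * T ≤ c * u0 := mul_le_mul_of_nonneg_left hTu0 hc.le
      linarith
    · push_neg at hTu0
      have htpos : 0 < t := by
        rcases lt_or_eq_of_le ht with h | h
        · exact h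
        · exfalso
          have hT' : T = 0 := by
            rw [hTdef, ← h]
            norm_num
          rw [hT'] at hTu0; linarith
      by_cases hreg : θ * (n : ℝ) ≤ b * t ^ γ
      · -- union bound regime (b t^γ large)
        refine le_trans (UB m n hn t ht) (ENNReal.ofReal_le_ofReal ?_)
        have hKn := hK' n t htpos hreg
        have hsplit : Real.exp (-(a * t ^ 2) / ((n : ℝ) + b * t ^ γ))
            = Real.exp (-((a - c) * T)) * Real.exp (-(c * T)) := by
          rw [← Real.exp_add]
          congr 1
          rw [hTdef]
          field_simp
          ring
        have hKe : (n : ℝ) * Real.exp (-((a - c) * T)) ≤ K' := by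
          calc (n : ℝ) * Real.exp (-((a - c) * T))
              ≤ (K' * Real.exp ((a - c) * T)) * Real.exp (-((a - c) * T)) := by
                apply mul_le_mul_of_nonneg_right _ (Real.exp_pos _).le
                rw [hTdef] at *
                exact hKn
            _ = K' := by rw [mul_assoc, ← Real.exp_add]; simp
        calc (n : ℝ) * (A * Real.exp (-(a * t ^ 2) / ((n : ℝ) + b * t ^ γ)))
            = A * ((n : ℝ) * Real.exp (-((a - c) * T))) * Real.exp (-(c * T)) := by
              rw [hsplit]; ring
          _ ≤ A * K' * Real.exp (-(c * T)) := by
              apply mul_le_mul_of_nonneg_right _ (Real.exp_pos _).le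
              exact mul_le_mul_of_nonneg_left hKe hA.le
          _ ≤ C * Real.exp (-(c * T)) := mul_le_mul_of_nonneg_right hCAK (Real.exp_pos _).le
          _ = C * Real.exp (-(c * t ^ 2) / ((n : ℝ) + b * t ^ γ)) := by rw [hrw]
      · push_neg at hreg
        by_cases hsmall : (n : ℝ) ≤ 1 / θ
        · -- small n : union bound
          refine le_trans (UB m n hn t ht) (ENNReal.ofReal_le_ofReal ?_)
          have h1 : Real.exp (-(a * t ^ 2) / ((n : ℝ) + b * t ^ γ))
              ≤ Real.exp (-(c * t ^ 2) / ((n : ℝ) + b * t ^ γ)) := by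
            apply Real.exp_le_exp.mpr
            rw [neg_div, neg_div, neg_le_neg_iff]
            gcongr
          calc (n : ℝ) * (A * Real.exp (-(a * t ^ 2) / ((n : ℝ) + b * t ^ γ)))
              ≤ (1 / θ) * (A * Real.exp (-(c * t ^ 2) / ((n : ℝ) + b * t ^ γ))) := by
                apply mul_le_mul hsmall (mul_le_mul_of_nonneg_left h1 hA.le)
                  (by positivity) (by positivity)
            _ = (A / θ) * Real.exp (-(c * t ^ 2) / ((n : ℝ) + b * t ^ γ)) := by ring
            _ ≤ C * Real.exp (-(c * t ^ 2) / ((n : ℝ) + b * t ^ γ)) :=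
                mul_le_mul_of_nonneg_right hCAθ (Real.exp_pos _).le
        · -- main induction step
          push_neg at hsmall
          have hθn1 : 1 < θ * (n : ℝ) := by
            rw [div_lt_iff₀ hθ0] at hsmall
            linarith
          set h : ℕ := ⌈θ * (n : ℝ)⌉₊ with hhdef
          have hh_ge : θ * (n : ℝ) ≤ (h : ℝ) := Nat.le_ceil _
          have hh_le : (h : ℝ) ≤ 2 * θ * (n : ℝ) := by
            have h2 := Nat.ceil_lt_add_one (by positivity : (0:ℝ) ≤ θ * (n : ℝ))
            rw [← hhdef] at h2
            linarith
          have hh1 : 1 ≤ h := Nat.ceil_pos.mpr (by positivity)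
          have hhn : h < n := by
            have w1 : θ * (n : ℝ) < (1 / 9) * (n : ℝ) :=
              mul_lt_mul_of_pos_right hθ9 (by linarith)
            have hlt : (h : ℝ) < (n : ℝ) := by linarith
            exact_mod_cast hlt
          set p : ℕ := n - h with hpdef
          have hp1 : 1 ≤ p := by omega
          have hpn : p < n := by omega
          have hph : p + h = n := by omega
          have hpcast : (p : ℝ) = (n : ℝ) - (h : ℝ) := by
            rw [hpdef]
            push_cast [Nat.cast_sub hhn.le]
            ring
          have hp1' : (1 : ℝ) ≤ (p : ℝ) := by exact_mod_cast hp1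
          have hh1' : (1 : ℝ) ≤ (h : ℝ) := by exact_mod_cast hh1
          -- event inclusion
          have hinc : {ω | t < (Finset.Icc (m + 1) (m + n)).sup'
                (Finset.nonempty_Icc.mpr (by omega))
                (fun j => |∑ i ∈ Finset.Icc (m + 1) j, X i ω|)}
              ⊆ {ω | t < (Finset.Icc (m + 1) (m + p)).sup'
                    (Finset.nonempty_Icc.mpr (by omega))
                    (fun j => |∑ i ∈ Finset.Icc (m + 1) j, X i ω|)}
                ∪ ({ω | (1 - ε) * t < |∑ i ∈ Finset.Icc (m + 1) (m + p), X i ω|}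
                ∪ {ω | ε * t < (Finset.Icc (m + p + 1) (m + p + h)).sup'
                    (Finset.nonempty_Icc.mpr (by omega))
                    (fun j => |∑ i ∈ Finset.Icc (m + p + 1) j, X i ω|)}) := by
            intro ω hω
            simp only [Set.mem_setOf_eq, Finset.lt_sup'_iff, Finset.mem_Icc] at hω
            obtain ⟨j, ⟨hj1, hj2⟩, hjt⟩ := hω
            by_cases hjp : j ≤ m + p
            · left
              simp only [Set.mem_setOf_eq, Finset.lt_sup'_iff, Finset.mem_Icc]
              exact ⟨j, ⟨hj1, hjp⟩, hjt⟩
            · right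
              push_neg at hjp
              have hsum : (∑ i ∈ Finset.Icc (m + 1) (m + p), X i ω)
                  + (∑ i ∈ Finset.Icc (m + p + 1) j, X i ω)
                  = ∑ i ∈ Finset.Icc (m + 1) j, X i ω := by
                rw [Finset.Icc_add_one_left_eq_Ioc, Finset.Icc_add_one_left_eq_Ioc, Finset.Icc_add_one_left_eq_Ioc]
                exact Finset.sum_Ioc_consecutive _ (Nat.le_add_right m p) (by omega)
              have htri : t < |∑ i ∈ Finset.Icc (m + 1) (m + p), X i ω|
                  + |∑ i ∈ Finset.Icc (m + p + 1) j, X i ω| := by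
                calc t < |∑ i ∈ Finset.Icc (m + 1) j, X i ω| := hjt
                  _ ≤ _ := by rw [← hsum]; exact abs_add_le _ _
              by_cases hS1 : (1 - ε) * t < |∑ i ∈ Finset.Icc (m + 1) (m + p), X i ω|
              · exact Or.inl hS1
              · right
                push_neg at hS1
                simp only [Set.mem_setOf_eq, Finset.lt_sup'_iff, Finset.mem_Icc]
                refine ⟨j, ⟨by omega, by omega⟩, by linarith⟩
          refine le_trans (measure_mono hinc) ?_
          refine le_trans (measure_union_le _ _) ?_
          have hεt0 : 0 ≤ (1 - ε) * t := mul_nonneg (by linarith) ht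
          have hεt0' : 0 ≤ ε * t := mul_nonneg hε0.le ht
          have B1 := ih p hpn m hp1 t ht
          have B2 := hBern m p hp1 ((1 - ε) * t) hεt0
          have B3 := ih h hhn (m + p) hh1 (ε * t) hεt0'
          refine le_trans (add_le_add B1 (le_trans (measure_union_le _ _) (add_le_add B2 B3))) ?_
          rw [← ENNReal.ofReal_add (by positivity) (by positivity),
            ← ENNReal.ofReal_add (by positivity) (by positivity)]
          apply ENNReal.ofReal_le_ofReal
          -- now the real inequality
          have hDp0 : 0 < (p : ℝ) + b * t ^ γ := by linarith
          have hεγ : ((1 - ε) * t) ^ γ ≤ t ^ γ := by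
            rw [Real.mul_rpow (by linarith) ht]
            calc (1 - ε) ^ γ * t ^ γ ≤ 1 * t ^ γ := by
                  apply mul_le_mul_of_nonneg_right _ (Real.rpow_nonneg ht _)
                  exact Real.rpow_le_one (by linarith) (by linarith) hγ0.le
              _ = t ^ γ := one_mul _
          have hεγ' : (ε * t) ^ γ ≤ t ^ γ := by
            rw [Real.mul_rpow hε0.le ht]
            calc ε ^ γ * t ^ γ ≤ 1 * t ^ γ := by
                  apply mul_le_mul_of_nonneg_right _ (Real.rpow_nonneg ht _)
                  exact Real.rpow_le_one hε0.le hε1.le hγ0.le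
              _ = t ^ γ := one_mul _
          -- Term 1 estimate
          have hDp_le : (p : ℝ) + b * t ^ γ ≤ ((n : ℝ) + b * t ^ γ) / (1 + θ) := by
            rw [hpcast, le_div_iff₀ (by positivity : (0:ℝ) < 1 + θ)]
            have w1 : θ * (b * t ^ γ) ≤ θ * (θ * (n : ℝ)) :=
              mul_le_mul_of_nonneg_left hreg.le hθ0.le
            have w2 : (1 + θ) * (θ * (n : ℝ)) ≤ (1 + θ) * (h : ℝ) :=
              mul_le_mul_of_nonneg_left hh_ge (by positivity)
            linarith [w1, w2]
          have e1 : c * T + Real.log 3 ≤ (c * t ^ 2) / ((p : ℝ) + b * t ^ γ) := by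
            have i1 : (c * t ^ 2) / (((n : ℝ) + b * t ^ γ) / (1 + θ))
                ≤ (c * t ^ 2) / ((p : ℝ) + b * t ^ γ) :=
              div_le_div_of_nonneg_left (mul_nonneg hc.le (sq_nonneg t)) hDp0 hDp_le
            have i2 : (c * t ^ 2) / (((n : ℝ) + b * t ^ γ) / (1 + θ)) = c * T + θ * (c * T) := by
              rw [hTdef]
              field_simp
            have i3 : Real.log 3 ≤ θ * (c * T) := by
              have w1 : (c * θ) * u0 ≤ (c * θ) * T :=
                mul_le_mul_of_nonneg_left hTu0.le (by positivity)
              linarith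
            linarith
          have hx1 : C * Real.exp (-(c * t ^ 2) / ((p : ℝ) + b * t ^ γ))
              ≤ C * (Real.exp (-(c * T)) / 3) := by
            apply mul_le_mul_of_nonneg_left _ hCpos.le
            rw [show Real.exp (-(c * T)) / 3 = Real.exp (-(c * T) - Real.log 3) by
              rw [Real.exp_sub, Real.exp_log (by norm_num)]]
            apply Real.exp_le_exp.mpr
            rw [neg_div]
            linarith
          -- Term 2 estimate
          have hDp'0 : 0 < (p : ℝ) + b * ((1 - ε) * t) ^ γ := by
            have := mul_nonneg hb (Real.rpow_nonneg hεt0 γ)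
            linarith
          have e2 : c * T + L ≤ (a * ((1 - ε) * t) ^ 2) / ((p : ℝ) + b * ((1 - ε) * t) ^ γ) := by
            have hnum : a * ((1 - ε) * t) ^ 2 = (c + κ) * t ^ 2 := by
              rw [mul_pow, ← mul_assoc, hεκ]
            have hden : (p : ℝ) + b * ((1 - ε) * t) ^ γ ≤ (n : ℝ) + b * t ^ γ := by
              have h1 : b * ((1 - ε) * t) ^ γ ≤ b * t ^ γ :=
                mul_le_mul_of_nonneg_left hεγ hb
              have h2 : (p : ℝ) ≤ (n : ℝ) := by exact_mod_cast hpn.le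
              linarith
            have j1 : ((c + κ) * t ^ 2) / ((n : ℝ) + b * t ^ γ)
                ≤ ((c + κ) * t ^ 2) / ((p : ℝ) + b * ((1 - ε) * t) ^ γ) :=
              div_le_div_of_nonneg_left (mul_nonneg (by linarith) (sq_nonneg t)) hDp'0 hden
            have j2 : ((c + κ) * t ^ 2) / ((n : ℝ) + b * t ^ γ) = c * T + κ * T := by
              rw [hTdef]
              field_simp
            have j3 : L ≤ κ * T := by
              have w1 : κ * u0 ≤ κ * T := mul_le_mul_of_nonneg_left hTu0.le hκ0.le
              linarith
            rw [hnum]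
            linarith
          have hx2 : A * Real.exp (-(a * ((1 - ε) * t) ^ 2) / ((p : ℝ) + b * ((1 - ε) * t) ^ γ))
              ≤ C * (Real.exp (-(c * T)) / 3) := by
            have k1 : Real.exp (-(a * ((1 - ε) * t) ^ 2) / ((p : ℝ) + b * ((1 - ε) * t) ^ γ))
                ≤ Real.exp (-(c * T) - L) := by
              apply Real.exp_le_exp.mpr
              rw [neg_div]
              linarith
            have k2 : Real.exp (-(c * T) - L) = Real.exp (-(c * T)) / (3 * (A + 3)) := by
              rw [Real.exp_sub, hLdef, Real.exp_log (by positivity)]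
            calc A * Real.exp (-(a * ((1 - ε) * t) ^ 2) / ((p : ℝ) + b * ((1 - ε) * t) ^ γ))
                ≤ A * (Real.exp (-(c * T)) / (3 * (A + 3))) := by
                  rw [← k2]
                  exact mul_le_mul_of_nonneg_left k1 hA.le
              _ ≤ 1 * (Real.exp (-(c * T)) / 3) := by
                  rw [one_mul]
                  have w1 : A / (3 * (A + 3)) ≤ 1 / 3 := by
                    rw [div_le_div_iff₀ (by positivity) (by norm_num)]
                    linarith
                  calc A * (Real.exp (-(c * T)) / (3 * (A + 3)))
                      = (A / (3 * (A + 3))) * Real.exp (-(c * T)) := by ring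
                    _ ≤ (1 / 3) * Real.exp (-(c * T)) :=
                        mul_le_mul_of_nonneg_right w1 (Real.exp_pos _).le
                    _ = Real.exp (-(c * T)) / 3 := by ring
              _ ≤ C * (Real.exp (-(c * T)) / 3) := by
                  apply mul_le_mul_of_nonneg_right hC1
                  positivity
          -- Term 3 estimate
          have hDh0 : 0 < (h : ℝ) + b * (ε * t) ^ γ := by
            have := mul_nonneg hb (Real.rpow_nonneg hεt0' γ)
            linarith
          have e3 : c * T + Real.log 3 ≤ (c * (ε * t) ^ 2) / ((h : ℝ) + b * (ε * t) ^ γ) := by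
            have k1 : (h : ℝ) + b * (ε * t) ^ γ ≤ 3 * θ * (n : ℝ) := by
              have h1 : b * (ε * t) ^ γ ≤ b * t ^ γ := mul_le_mul_of_nonneg_left hεγ' hb
              linarith [hreg, hh_le]
            have k2 : (c * (ε * t) ^ 2) / (3 * θ * (n : ℝ))
                ≤ (c * (ε * t) ^ 2) / ((h : ℝ) + b * (ε * t) ^ γ) :=
              div_le_div_of_nonneg_left (mul_nonneg hc.le (sq_nonneg _)) hDh0 k1
            have k3 : (c * (ε * t) ^ 2) / (3 * θ * (n : ℝ)) = 3 * c * (t ^ 2 / (n : ℝ)) := by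
              rw [mul_pow, hθε]
              field_simp
              ring
            have k4 : T ≤ t ^ 2 / (n : ℝ) := by
              rw [hTdef]
              exact div_le_div_of_nonneg_left (sq_nonneg t) (by linarith) (by linarith)
            have k5 : Real.log 3 ≤ 2 * c * T := by
              have w1 : (2 * c) * u0 ≤ (2 * c) * T :=
                mul_le_mul_of_nonneg_left hTu0.le (by positivity)
              linarith
            have k6 : c * T + Real.log 3 ≤ 3 * c * T := by linarith
            calc c * T + Real.log 3 ≤ 3 * c * T := k6
              _ ≤ 3 * c * (t ^ 2 / (n : ℝ)) :=
                mul_le_mul_of_nonneg_left k4 (by positivity)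
              _ = (c * (ε * t) ^ 2) / (3 * θ * (n : ℝ)) := k3.symm
              _ ≤ _ := k2
          have hx3 : C * Real.exp (-(c * (ε * t) ^ 2) / ((h : ℝ) + b * (ε * t) ^ γ))
              ≤ C * (Real.exp (-(c * T)) / 3) := by
            apply mul_le_mul_of_nonneg_left _ hCpos.le
            rw [show Real.exp (-(c * T)) / 3 = Real.exp (-(c * T) - Real.log 3) by
              rw [Real.exp_sub, Real.exp_log (by norm_num)]]
            apply Real.exp_le_exp.mpr
            rw [neg_div]
            linarith
          rw [hrw]
          linarith [hx1, hx2, hx3]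
  intro m n hn t ht
  exact KEY n m hn t ht
end

section
/- Let X_1, X_2, … be a sequence of real-valued random variables and let C > 0, v > 0, M > 0 be constants such that for all integers m ≥ 0, n ≥ 1 and all reals t ≥ 0, P{|S(m+1, m+n)| > t} ≤ exp(−C t² / (n v² + M² + t M (log n)²)). Then for every η ∈ (0,1) there exist constants A > 0, a > 0 and b ≥ 0 such that, with γ = 1 + η, for all integers m ≥ 0, n ≥ 1 and all reals t ≥ 0, P{|S(m+1, m+n)| > t} ≤ A·exp(−a t² / (n + b t^γ)). -/
open MeasureTheory Finset

set_option maxHeartbeats 1000000 in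
/-- Example 3 of Kevei–Mason: if a sequence of real random variables satisfies the
Merlevède–Peligrad–Rio type inequality
`P{|S(m+1, m+n)| > t} ≤ exp(−C t² / (n v² + M² + t M (log n)²))`,
then for every `η ∈ (0,1)` the generalized Bernstein-type inequality
`P{|S(m+1, m+n)| > t} ≤ A · exp(−a t² / (n + b t^γ))` holds with `γ = 1 + η`
for suitable `A > 0`, `a > 0` and `b ≥ 0`. -/
theorem mpr_implies_generalized_bernstein
    {Ω : Type*} [MeasurableSpace Ω] (P : Measure Ω) [IsProbabilityMeasure P]
    (X : ℕ → Ω → ℝ) (C v M : ℝ) (hC : 0 < C) (hv : 0 < v) (hM : 0 < M)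
    (hMPR : ∀ (m n : ℕ), 1 ≤ n → ∀ t : ℝ, 0 ≤ t →
      P {ω | t < |∑ i ∈ Finset.Icc (m + 1) (m + n), X i ω|}
        ≤ ENNReal.ofReal
            (Real.exp (-(C * t ^ 2) /
              (n * v ^ 2 + M ^ 2 + t * M * (Real.log n) ^ 2)))) :
    ∀ η : ℝ, η ∈ Set.Ioo (0 : ℝ) 1 →
      ∃ A a b : ℝ, 0 < A ∧ 0 < a ∧ 0 ≤ b ∧
        ∀ (m n : ℕ), 1 ≤ n → ∀ t : ℝ, 0 ≤ t →
          P {ω | t < |∑ i ∈ Finset.Icc (m + 1) (m + n), X i ω|}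
            ≤ ENNReal.ofReal (A * Real.exp (-(a * t ^ 2) / (n + b * t ^ (1 + η)))) := by
  rintro η ⟨hη0, hη1⟩
  set c : ℝ := η / (2 + 2 * η) with hc_def
  have hc : 0 < c := div_pos hη0 (by linarith)
  set K : ℝ := (1 / c) ^ (2 + 2 * η : ℝ) with hK_def
  have hK0 : 0 < K := Real.rpow_pos_of_pos (by positivity) _
  -- Lemma A : log x ≤ x^c / c for x ≥ 1
  have hlogle : ∀ x : ℝ, 1 ≤ x → Real.log x ≤ x ^ (c : ℝ) / c := by
    intro x hx
    have hx0 : 0 < x := lt_of_lt_of_le one_pos hx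
    have h1 : Real.log (x ^ (c : ℝ)) = c * Real.log x := Real.log_rpow hx0 c
    have h2 : Real.log (x ^ (c : ℝ)) ≤ x ^ (c : ℝ) - 1 :=
      Real.log_le_sub_one_of_pos (Real.rpow_pos_of_pos hx0 c)
    rw [le_div_iff₀ hc]
    nlinarith
  -- Key lemma : t * (log n)^2 ≤ n + K * t^(1+η)
  have key : ∀ n : ℕ, 1 ≤ n → ∀ t : ℝ, 0 ≤ t →
      t * (Real.log n) ^ 2 ≤ (n : ℝ) + K * t ^ (1 + η : ℝ) := by
    intro n hn t ht
    have hn1 : (1 : ℝ) ≤ (n : ℝ) := by exact_mod_cast hn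
    have hL0 : 0 ≤ Real.log n := Real.log_nonneg hn1
    by_cases hcase : t * (Real.log n) ^ 2 ≤ (n : ℝ)
    · have : 0 ≤ K * t ^ (1 + η : ℝ) := by positivity
      linarith
    · push_neg at hcase
      have hL : 0 < Real.log n := by
        rcases lt_or_eq_of_le hL0 with h | h
        · exact h
        · rw [← h] at hcase; simp at hcase; linarith
      have hn0 : (0 : ℝ) < n := by linarith
      have ht0 : 0 < t := by nlinarith [sq_nonneg (Real.log n)]
      have htge : (n : ℝ) / (Real.log n) ^ 2 ≤ t := by
        rw [div_le_iff₀ (by positivity)]; nlinarith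
      -- (log n)^(2+2η) ≤ K * n^η
      have h3 : (Real.log n) ^ 2 * ((Real.log n) ^ 2) ^ (η : ℝ) ≤ K * (n : ℝ) ^ (η : ℝ) := by
        have hA : Real.log n ≤ (1 / c) * (n : ℝ) ^ (c : ℝ) := by
          rw [one_div, inv_mul_eq_div]; exact hlogle _ hn1
        have hpow : (Real.log n) ^ (2 + 2 * η : ℝ)
            ≤ ((1 / c) * (n : ℝ) ^ (c : ℝ)) ^ (2 + 2 * η : ℝ) :=
          Real.rpow_le_rpow hL0 hA (by linarith)
        have hrhs : ((1 / c) * (n : ℝ) ^ (c : ℝ)) ^ (2 + 2 * η : ℝ)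
            = K * (n : ℝ) ^ (η : ℝ) := by
          have hcp : c * (2 + 2 * η) = η := by
            rw [hc_def]; field_simp
          rw [Real.mul_rpow (by positivity) (by positivity),
            ← Real.rpow_mul (le_of_lt hn0), hcp]
        have hlhs : (Real.log n) ^ 2 * ((Real.log n) ^ 2) ^ (η : ℝ)
            = (Real.log n) ^ (2 + 2 * η : ℝ) := by
          rw [← Real.rpow_natCast (Real.log n) 2, ← Real.rpow_mul hL0,
            ← Real.rpow_add hL]
          norm_num
        rw [hlhs]
        calc (Real.log n) ^ (2 + 2 * η : ℝ)
            ≤ ((1 / c) * (n : ℝ) ^ (c : ℝ)) ^ (2 + 2 * η : ℝ) := hpow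
          _ = K * (n : ℝ) ^ (η : ℝ) := hrhs
      -- so (log n)^2 ≤ K * t^η
      have hLsq : 0 < ((Real.log n) ^ 2) ^ (η : ℝ) := Real.rpow_pos_of_pos (by positivity) _
      have h4 : (Real.log n) ^ 2 ≤ K * t ^ (η : ℝ) := by
        have h2 : ((n : ℝ) / (Real.log n) ^ 2) ^ (η : ℝ) ≤ t ^ (η : ℝ) :=
          Real.rpow_le_rpow (by positivity) htge (le_of_lt hη0)
        have hdiv : ((n : ℝ) / (Real.log n) ^ 2) ^ (η : ℝ)
            = (n : ℝ) ^ (η : ℝ) / ((Real.log n) ^ 2) ^ (η : ℝ) :=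
          Real.div_rpow (by positivity) (by positivity) _
        have h5 : (Real.log n) ^ 2 ≤ K * ((n : ℝ) ^ (η : ℝ) / ((Real.log n) ^ 2) ^ (η : ℝ)) := by
          rw [mul_div_assoc'] at *
          rw [le_div_iff₀ hLsq]
          nlinarith
        calc (Real.log n) ^ 2
            ≤ K * ((n : ℝ) ^ (η : ℝ) / ((Real.log n) ^ 2) ^ (η : ℝ)) := h5
          _ = K * ((n : ℝ) / (Real.log n) ^ 2) ^ (η : ℝ) := by rw [hdiv]
          _ ≤ K * t ^ (η : ℝ) := by nlinarith [Real.rpow_nonneg (le_of_lt ht0) (η : ℝ)]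
      have h6 : t ^ (1 + η : ℝ) = t * t ^ (η : ℝ) := by
        rw [Real.rpow_add ht0, Real.rpow_one]
      calc t * (Real.log n) ^ 2 ≤ t * (K * t ^ (η : ℝ)) := by nlinarith
        _ = K * t ^ (1 + η : ℝ) := by rw [h6]; ring
        _ ≤ (n : ℝ) + K * t ^ (1 + η : ℝ) := by linarith

  set c₀ : ℝ := v ^ 2 + M ^ 2 + M with hc₀_def
  have hc₀ : 0 < c₀ := by positivity
  refine ⟨1, C / c₀, M * K / c₀, one_pos, div_pos hC hc₀, by positivity, ?_⟩
  intro m n hn t ht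
  refine (hMPR m n hn t ht).trans (ENNReal.ofReal_le_ofReal ?_)
  rw [one_mul]
  apply Real.exp_le_exp.mpr
  have hn1 : (1 : ℝ) ≤ (n : ℝ) := by exact_mod_cast hn
  have htp : 0 ≤ t ^ (1 + η : ℝ) := Real.rpow_nonneg ht _
  have hD : 0 < (n : ℝ) * v ^ 2 + M ^ 2 + t * M * (Real.log n) ^ 2 := by
    have : 0 ≤ t * M * (Real.log n) ^ 2 := by positivity
    nlinarith
  have hE : 0 < (n : ℝ) + M * K / c₀ * t ^ (1 + η : ℝ) := by
    have : 0 ≤ M * K / c₀ * t ^ (1 + η : ℝ) := by positivity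
    linarith
  have hDE : (n : ℝ) * v ^ 2 + M ^ 2 + t * M * (Real.log n) ^ 2
      ≤ c₀ * ((n : ℝ) + M * K / c₀ * t ^ (1 + η : ℝ)) := by
    have hk := key n hn t ht
    have hM2 : M ^ 2 ≤ M ^ 2 * n := by nlinarith
    have : c₀ * ((n : ℝ) + M * K / c₀ * t ^ (1 + η : ℝ))
        = c₀ * n + M * K * t ^ (1 + η : ℝ) := by
      field_simp
    rw [this, hc₀_def]
    nlinarith
  rw [neg_div, neg_div, neg_le_neg_iff]
  calc C / c₀ * t ^ 2 / ((n : ℝ) + M * K / c₀ * t ^ (1 + η : ℝ))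
      = C * t ^ 2 / (c₀ * ((n : ℝ) + M * K / c₀ * t ^ (1 + η : ℝ))) := by
        rw [div_mul_eq_mul_div, div_div]
    _ ≤ C * t ^ 2 / ((n : ℝ) * v ^ 2 + M ^ 2 + t * M * (Real.log n) ^ 2) := by
        apply div_le_div_of_nonneg_left (by positivity) hD hDE
end

section
/- Let Y, Z_1, Z_2, … be independent random variables, where Y takes the values 0 and 1 each with probability 1/2 and Z_1, Z_2, … are standard normal. Define X_i = Y·Z_i for i ≥ 1. Then for all integers m ≥ 0, n ≥ 1 and all reals t ≥ 0, P{|S(m+1, m+n)| > t} ≤ 2·exp(−t²/(2n)); that is, the sequence X_1, X_2, … satisfies the generalized Bernstein-type inequality with constants A = 2, a = 1/2, b = 0 and γ = 1. -/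
open MeasureTheory Finset ProbabilityTheory Real
open scoped ENNReal NNReal

lemma gauss_pdf_mul_exp (c : ℝ) (x : ℝ) :
    Real.exp (c * x) * gaussianPDFReal 0 1 x
      = Real.exp (c ^ 2 / 2) * gaussianPDFReal c 1 x := by
  simp only [gaussianPDFReal, NNReal.coe_one, mul_one]
  rw [mul_left_comm, mul_left_comm (Real.exp (c ^ 2 / 2)), ← Real.exp_add, ← Real.exp_add]
  congr 1
  ring

lemma integrable_exp_gauss (c : ℝ) :
    Integrable (fun x => Real.exp (c * x)) (gaussianReal 0 1) := by
  rw [gaussianReal_of_var_ne_zero _ one_ne_zero, gaussianPDF_def]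
  have hmeas : Measurable fun x => (gaussianPDFReal 0 1 x).toNNReal :=
    (measurable_gaussianPDFReal 0 1).real_toNNReal
  have : (fun x => ENNReal.ofReal (gaussianPDFReal 0 1 x))
      = fun x => ((gaussianPDFReal 0 1 x).toNNReal : ℝ≥0∞) := rfl
  rw [this, integrable_withDensity_iff_integrable_smul hmeas]
  have heq : (fun x => (gaussianPDFReal 0 1 x).toNNReal • Real.exp (c * x))
      = fun x => Real.exp (c ^ 2 / 2) * gaussianPDFReal c 1 x := by
    funext x
    rw [NNReal.smul_def, smul_eq_mul, Real.coe_toNNReal _ (gaussianPDFReal_nonneg 0 1 x),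
      mul_comm, gauss_pdf_mul_exp]
  rw [heq]
  exact (integrable_gaussianPDFReal c 1).const_mul _

lemma integral_exp_gauss (c : ℝ) :
    ∫ x, Real.exp (c * x) ∂(gaussianReal 0 1) = Real.exp (c ^ 2 / 2) := by
  rw [gaussianReal_of_var_ne_zero _ one_ne_zero, gaussianPDF_def]
  have hmeas : Measurable fun x => (gaussianPDFReal 0 1 x).toNNReal :=
    (measurable_gaussianPDFReal 0 1).real_toNNReal
  have : (fun x => ENNReal.ofReal (gaussianPDFReal 0 1 x))
      = fun x => ((gaussianPDFReal 0 1 x).toNNReal : ℝ≥0∞) := rfl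
  rw [this, integral_withDensity_eq_integral_smul hmeas]
  have heq : (fun x => (gaussianPDFReal 0 1 x).toNNReal • Real.exp (c * x))
      = fun x => Real.exp (c ^ 2 / 2) * gaussianPDFReal c 1 x := by
    funext x
    rw [NNReal.smul_def, smul_eq_mul, Real.coe_toNNReal _ (gaussianPDFReal_nonneg 0 1 x),
      mul_comm, gauss_pdf_mul_exp]
  rw [heq, integral_const_mul, integral_gaussianPDFReal_eq_one c one_ne_zero, mul_one]

lemma mgf_std_gauss {Ω : Type*} [MeasurableSpace Ω] (P : Measure Ω)
    {X : Ω → ℝ} (hX : Measurable X) (hdist : P.map X = gaussianReal 0 1) (c : ℝ) :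
    mgf X P c = Real.exp (c ^ 2 / 2) := by
  rw [mgf]
  have : ∫ ω, Real.exp (c * X ω) ∂P = ∫ x, Real.exp (c * x) ∂(P.map X) := by
    rw [integral_map hX.aemeasurable]
    exact (Real.continuous_exp.comp (continuous_const.mul continuous_id)).aestronglyMeasurable
  rw [this, hdist, integral_exp_gauss]

lemma integrable_exp_std_gauss {Ω : Type*} [MeasurableSpace Ω] (P : Measure Ω)
    {X : Ω → ℝ} (hX : Measurable X) (hdist : P.map X = gaussianReal 0 1) (c : ℝ) :
    Integrable (fun ω => Real.exp (c * X ω)) P := by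
  have h : Integrable (fun x => Real.exp (c * x)) (P.map X) := by
    rw [hdist]; exact integrable_exp_gauss c
  exact (integrable_map_measure
    (Real.continuous_exp.comp (continuous_const.mul continuous_id)).aestronglyMeasurable
    hX.aemeasurable).mp h

/-- Remark 7 of Kevei–Mason, first part: let `Y, Z 1, Z 2, …` be independent random
variables, where `Y` takes the values `0` and `1` each with probability `1/2` and the
`Z i` are standard normal. The sequence `X i = Y * Z i` satisfies the generalized
Bernstein-type inequality with `A = 2`, `a = 1/2`, `b = 0`, `γ = 1`:
`P{|S(m+1, m+n)| > t} ≤ 2 · exp(−t² / (2n))`. -/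
theorem bernstein_for_YZ_example
    {Ω : Type*} [MeasurableSpace Ω] (P : Measure Ω) [IsProbabilityMeasure P]
    (Y : Ω → ℝ) (Z : ℕ → Ω → ℝ)
    (hYmeas : Measurable Y) (hZmeas : ∀ i, Measurable (Z i))
    (hindep : iIndepFun (m := fun _ : ℕ => (inferInstance : MeasurableSpace ℝ))
      (fun i => if i = 0 then Y else Z i) P)
    (hYdist : P.map Y
      = (2⁻¹ : ℝ≥0∞) • Measure.dirac (0 : ℝ) + (2⁻¹ : ℝ≥0∞) • Measure.dirac (1 : ℝ))
    (hZdist : ∀ i, 1 ≤ i → P.map (Z i) = gaussianReal 0 1) :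
    ∀ (m n : ℕ), 1 ≤ n → ∀ t : ℝ, 0 ≤ t →
      P {ω | t < |∑ i ∈ Finset.Icc (m + 1) (m + n), Y ω * Z i ω|}
        ≤ ENNReal.ofReal (2 * Real.exp (-t ^ 2 / (2 * n))) := by
  intro m n hn t ht
  set f : ℕ → Ω → ℝ := fun i => if i = 0 then Y else Z i with hf
  set s : Finset ℕ := Finset.Icc (m + 1) (m + n) with hs
  have hfmeas : ∀ i, Measurable (f i) := by
    intro i
    by_cases hi : i = 0 <;> simp [hf, hi, hYmeas, hZmeas i]
  have hmem_ne : ∀ i ∈ s, i ≠ 0 := by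
    intro i hi
    rw [hs, Finset.mem_Icc] at hi
    omega
  set W : Ω → ℝ := ∑ i ∈ s, f i with hW
  have hWeq : ∀ ω, W ω = ∑ i ∈ s, Z i ω := by
    intro ω
    rw [hW]
    simp only [Finset.sum_apply]
    exact Finset.sum_congr rfl fun i hi => by simp [hf, hmem_ne i hi]
  have hcard : s.card = n := by rw [hs, Nat.card_Icc]; omega
  -- mgf of W
  have hmgf : ∀ c : ℝ, mgf W P c = Real.exp (n * (c ^ 2 / 2)) := by
    intro c
    rw [hW, hindep.mgf_sum hfmeas s]
    have : ∀ i ∈ s, mgf (f i) P c = Real.exp (c ^ 2 / 2) := by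
      intro i hi
      have hine := hmem_ne i hi
      have : f i = Z i := by simp [hf, hine]
      rw [this]
      exact mgf_std_gauss P (hZmeas i) (hZdist i (Nat.one_le_iff_ne_zero.mpr hine)) c
    rw [Finset.prod_congr rfl this, Finset.prod_const, hcard, ← Real.exp_nat_mul]
  have hint : ∀ c : ℝ, Integrable (fun ω => Real.exp (c * W ω)) P := by
    intro c
    rw [hW]
    refine hindep.integrable_exp_mul_sum hfmeas fun i hi => ?_
    have hine := hmem_ne i hi
    have hfi : f i = Z i := by simp [hf, hine]
    rw [hfi]
    exact integrable_exp_std_gauss P (hZmeas i) (hZdist i (Nat.one_le_iff_ne_zero.mpr hine)) c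
  have hnpos : (0 : ℝ) < n := by exact_mod_cast hn
  -- Chernoff upper tail
  have hbound : Real.exp (-(t / n) * t) * Real.exp (n * ((t / n) ^ 2 / 2))
      = Real.exp (-t ^ 2 / (2 * n)) := by
    rw [← Real.exp_add]
    congr 1
    field_simp
    ring
  have hupper : (P {ω | t ≤ W ω}).toReal ≤ Real.exp (-t ^ 2 / (2 * n)) := by
    have := measure_ge_le_exp_mul_mgf (μ := P) (X := W) t (by positivity : (0:ℝ) ≤ t / n)
      (hint (t / n))
    rwa [hmgf (t / n), hbound] at this
  have hlower : (P {ω | W ω ≤ -t}).toReal ≤ Real.exp (-t ^ 2 / (2 * n)) := by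
    have := measure_le_le_exp_mul_mgf (μ := P) (X := W) (-t)
      (neg_nonpos.mpr (by positivity : (0:ℝ) ≤ t / n)) (hint (-(t / n)))
    rw [hmgf (-(t / n))] at this
    have harith : Real.exp (- -(t / n) * -t) * Real.exp (n * ((-(t / n)) ^ 2 / 2))
        = Real.exp (-t ^ 2 / (2 * n)) := by
      rw [← Real.exp_add]
      congr 1
      field_simp
      ring
    rwa [harith] at this
  -- Y ∈ {0, 1} a.s.
  have hYnull : P {ω | Y ω ≠ 0 ∧ Y ω ≠ 1} = 0 := by
    have hset : MeasurableSet ({0, 1}ᶜ : Set ℝ) := by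
      refine (MeasurableSet.insert (measurableSet_singleton 1) 0).compl
    have hpre : {ω | Y ω ≠ 0 ∧ Y ω ≠ 1} = Y ⁻¹' ({0, 1}ᶜ : Set ℝ) := by
      ext ω
      simp [not_or]
    rw [hpre, ← Measure.map_apply hYmeas hset, hYdist]
    simp [Measure.dirac_apply' _ hset, Set.indicator]
  -- event inclusion
  have hsub : {ω | t < |∑ i ∈ Finset.Icc (m + 1) (m + n), Y ω * Z i ω|}
      ⊆ {ω | Y ω ≠ 0 ∧ Y ω ≠ 1} ∪ ({ω | t ≤ W ω} ∪ {ω | W ω ≤ -t}) := by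
    intro ω hω
    simp only [Set.mem_setOf_eq] at hω
    have hsum : ∑ i ∈ Finset.Icc (m + 1) (m + n), Y ω * Z i ω = Y ω * W ω := by
      rw [hWeq, Finset.mul_sum, hs]
    rw [hsum] at hω
    by_cases h0 : Y ω = 0
    · exfalso
      rw [h0, zero_mul, abs_zero] at hω
      exact absurd hω (not_lt.mpr ht)
    by_cases h1 : Y ω = 1
    · right
      rw [h1, one_mul] at hω
      rcases lt_abs.mp hω with h | h
      · left; exact Set.mem_setOf_eq ▸ h.le
      · right; simp only [Set.mem_setOf_eq]; linarith
    · left; exact ⟨h0, h1⟩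
  calc P {ω | t < |∑ i ∈ Finset.Icc (m + 1) (m + n), Y ω * Z i ω|}
      ≤ P ({ω | Y ω ≠ 0 ∧ Y ω ≠ 1} ∪ ({ω | t ≤ W ω} ∪ {ω | W ω ≤ -t})) := measure_mono hsub
    _ ≤ P {ω | Y ω ≠ 0 ∧ Y ω ≠ 1} + P ({ω | t ≤ W ω} ∪ {ω | W ω ≤ -t}) := measure_union_le _ _
    _ = P ({ω | t ≤ W ω} ∪ {ω | W ω ≤ -t}) := by rw [hYnull, zero_add]
    _ ≤ P {ω | t ≤ W ω} + P {ω | W ω ≤ -t} := measure_union_le _ _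
    _ ≤ ENNReal.ofReal (Real.exp (-t ^ 2 / (2 * n)))
        + ENNReal.ofReal (Real.exp (-t ^ 2 / (2 * n))) := by
        gcongr
        · rw [← ENNReal.ofReal_toReal (measure_ne_top P _)]
          exact ENNReal.ofReal_le_ofReal hupper
        · rw [← ENNReal.ofReal_toReal (measure_ne_top P _)]
          exact ENNReal.ofReal_le_ofReal hlower
    _ = ENNReal.ofReal (2 * Real.exp (-t ^ 2 / (2 * n))) := by
        rw [← ENNReal.ofReal_add (Real.exp_pos _).le (Real.exp_pos _).le]
        ring_nf
end

section
/- Let X_1, X_2, … be a sequence of real-valued random variables and suppose there are constants C > 0, c > 0, b ≥ 0 and γ ∈ (0,2) such that for all integers n ≥ 1 and all reals t ≥ 0, P{M(1,n) > t} ≤ C·exp(−c t² / (n + b t^γ)). Fix λ > 1 and set m_r = ⌈λ^r⌉ for r = 1, 2, …. Then there exists r₀ ≥ 1 with log log m_{r₀} > 0 such that Σ_{r=r₀}^{∞} P{ M(1, m_r) > √(c^{−1} m_{r+1} log log m_r) } < ∞. -/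
open MeasureTheory Finset Filter

set_option maxHeartbeats 2000000 in
/-- The Borel–Cantelli step in the proof of Corollary 1 of Kevei–Mason: if the
maxima `M(1,n) = max_{1 ≤ j ≤ n} |S(1,j)|` satisfy
`P{M(1,n) > t} ≤ C · exp(−c t² / (n + b t^γ))`, then for `λ > 1` and
`m_r = ⌈λ^r⌉` there is an `r₀ ≥ 1` with `log log m_{r₀} > 0` such that
`∑_{r ≥ r₀} P{ M(1, m_r) > √(c⁻¹ m_{r+1} log log m_r) } < ∞`. -/
theorem borel_cantelli_step
    {Ω : Type*} [MeasurableSpace Ω] (P : Measure Ω) [IsProbabilityMeasure P]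
    (X : ℕ → Ω → ℝ) (C c b γ : ℝ)
    (hC : 0 < C) (hc : 0 < c) (hb : 0 ≤ b) (hγ : γ ∈ Set.Ioo (0 : ℝ) 2)
    (hmax : ∀ n : ℕ, ∀ hn : 1 ≤ n, ∀ t : ℝ, 0 ≤ t →
      P {ω | t < (Finset.Icc 1 n).sup' (Finset.nonempty_Icc.mpr hn)
            (fun j => |∑ i ∈ Finset.Icc 1 j, X i ω|)}
        ≤ ENNReal.ofReal (C * Real.exp (-(c * t ^ 2) / (n + b * t ^ γ))))
    (lam : ℝ) (hlam : 1 < lam) :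
    ∃ r₀ : ℕ, 1 ≤ r₀ ∧ 0 < Real.log (Real.log (⌈lam ^ r₀⌉₊ : ℝ)) ∧
      (∑' r : ℕ,
        P {ω | Real.sqrt (c⁻¹ * (⌈lam ^ (r₀ + r + 1)⌉₊ : ℝ) *
              Real.log (Real.log (⌈lam ^ (r₀ + r)⌉₊ : ℝ)))
            < (Finset.Icc 1 ⌈lam ^ (r₀ + r)⌉₊).sup'
                (Finset.nonempty_Icc.mpr
                  (Nat.one_le_ceil_iff.mpr (pow_pos (lt_trans one_pos hlam) _)))
                (fun j => |∑ i ∈ Finset.Icc 1 j, X i ω|)}) < ⊤ := by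
  obtain ⟨hγ0, hγ2⟩ := hγ
  have hlam0 : (0:ℝ) < lam := lt_trans one_pos hlam
  have hloglam : 0 < Real.log lam := Real.log_pos hlam
  have hlog2 : 0 < Real.log 2 := Real.log_pos one_lt_two
  set β : ℝ := (1 + lam) / 2 with hβdef
  have hβ1 : 1 < β := by rw [hβdef]; linarith
  have hβlam : β < lam := by rw [hβdef]; linarith
  have hβ0 : 0 < β := by linarith
  set ε : ℝ := (lam - β) / (2 * β) with hεdef
  have hε0 : 0 < ε := by
    rw [hεdef]; exact div_pos (by linarith) (by linarith)
  have hβε : β * ε = (lam - β) / 2 := by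
    rw [hεdef]; field_simp
  have hpow1 : ∀ r : ℕ, (1:ℝ) ≤ lam ^ r := fun r => one_le_pow₀ hlam.le
  have hmge : ∀ r : ℕ, lam ^ r ≤ (⌈lam ^ r⌉₊ : ℝ) := fun r => Nat.le_ceil _
  have hmle : ∀ r : ℕ, (⌈lam ^ r⌉₊ : ℝ) ≤ lam ^ r + 1 :=
    fun r => le_of_lt (Nat.ceil_lt_add_one (by positivity))
  have hm1 : ∀ r : ℕ, 1 ≤ ⌈lam ^ r⌉₊ := fun r => Nat.one_le_ceil_iff.mpr (pow_pos hlam0 r)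
  set K : ℝ := Real.log 2 + Real.log lam with hKdef
  have hK0 : 0 < K := by rw [hKdef]; linarith
  set q : ℝ := lam ^ (γ/2 - 1) with hqdef
  have hq0 : 0 ≤ q := Real.rpow_nonneg hlam0.le _
  have hq1 : q < 1 := Real.rpow_lt_one_of_one_lt_of_neg hlam (by linarith)
  set D : ℝ := b * (c⁻¹ * (2 * lam) * K) ^ (γ/2) with hDdef
  have hD0 : 0 ≤ D := by
    apply mul_nonneg hb (Real.rpow_nonneg (by positivity) _)
  -- tendsto fact
  have htend : Tendsto (fun r : ℕ => D * (((r:ℝ) + 1) * q ^ r)) atTop (nhds 0) := by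
    have h1' : ‖q‖ < 1 := by rwa [Real.norm_eq_abs, abs_of_nonneg hq0]
    have ha : Tendsto (fun n : ℕ => (n : ℝ) ^ 1 * q ^ n) atTop (nhds 0) :=
      (summable_pow_mul_geometric_of_norm_lt_one 1 h1').tendsto_atTop_zero
    have hbq : Tendsto (fun n : ℕ => q ^ n) atTop (nhds 0) :=
      tendsto_pow_atTop_nhds_zero_of_lt_one hq0 hq1
    have h2 := (ha.add hbq).const_mul D
    simp only [add_zero, mul_zero] at h2
    convert h2 using 2 with n
    ring
  -- eventual facts
  have E1 : ∀ᶠ r : ℕ in atTop, (3:ℝ) ≤ lam ^ r :=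
    (tendsto_pow_atTop_atTop_of_one_lt hlam).eventually_ge_atTop 3
  have E2 : ∀ᶠ r : ℕ in atTop, β ≤ (lam - β) / 2 * lam ^ r := by
    filter_upwards [(tendsto_pow_atTop_atTop_of_one_lt hlam).eventually_ge_atTop
      (β / ((lam - β) / 2))] with r hr
    rw [div_le_iff₀ (by linarith : (0:ℝ) < (lam - β) / 2)] at hr
    linarith
  have E3 : ∀ᶠ r : ℕ in atTop, D * (((r:ℝ) + 1) * q ^ r) ≤ ε :=
    htend.eventually_le_const hε0
  have E4 : ∀ᶠ r : ℕ in atTop, 1 ≤ r := eventually_ge_atTop 1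
  have key : ∀ᶠ r : ℕ in atTop,
      0 < Real.log (Real.log (⌈lam ^ r⌉₊ : ℝ)) ∧
      P {ω | Real.sqrt (c⁻¹ * (⌈lam ^ (r+1)⌉₊ : ℝ) *
              Real.log (Real.log (⌈lam ^ r⌉₊ : ℝ)))
            < (Finset.Icc 1 ⌈lam ^ r⌉₊).sup' (Finset.nonempty_Icc.mpr (hm1 r))
                (fun j => |∑ i ∈ Finset.Icc 1 j, X i ω|)}
        ≤ ENNReal.ofReal (C * (Real.log lam ^ (-β) * (r:ℝ) ^ (-β))) := by
    filter_upwards [E1, E2, E3, E4] with r h3 h2 hD3 hr1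
    set mr : ℝ := (⌈lam ^ r⌉₊ : ℝ) with hmrdef
    set mr1 : ℝ := (⌈lam ^ (r+1)⌉₊ : ℝ) with hmr1def
    have hmr3 : (3:ℝ) ≤ mr := le_trans h3 (hmge r)
    have hlog1 : 1 < Real.log mr := by
      rw [Real.lt_log_iff_exp_lt (by linarith)]
      calc Real.exp 1 < 2.7182818286 := Real.exp_one_lt_d9
        _ ≤ mr := by linarith
    have hL0 : 0 < Real.log (Real.log mr) := Real.log_pos hlog1
    refine ⟨hL0, ?_⟩
    set L : ℝ := Real.log (Real.log mr) with hLdef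
    set x : ℝ := c⁻¹ * mr1 * L with hxdef
    have hmr10 : 0 ≤ mr1 := Nat.cast_nonneg _
    have hx0 : 0 ≤ x := by
      apply mul_nonneg (mul_nonneg (by positivity) hmr10) hL0.le
    set t : ℝ := Real.sqrt x with htdef
    have ht0 : 0 ≤ t := Real.sqrt_nonneg x
    have htγ : t ^ γ = x ^ (γ/2) := by
      rw [htdef, Real.sqrt_eq_rpow, ← Real.rpow_mul hx0]
      congr 1; ring
    -- bound b * t^γ ≤ ε * lam^r
    have hL_le : L ≤ ((r:ℝ) + 1) * K := by
      have l1 : L ≤ Real.log mr := Real.log_le_self (by linarith)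
      have l2 : mr ≤ 2 * lam ^ r := by
        have := hmle r; have := hpow1 r; linarith
      have l3 : Real.log mr ≤ Real.log (2 * lam ^ r) :=
        Real.log_le_log (by linarith) l2
      have l4 : Real.log (2 * lam ^ r) = Real.log 2 + (r:ℝ) * Real.log lam := by
        rw [Real.log_mul two_ne_zero (by positivity), Real.log_pow]
      have l5 : Real.log 2 + (r:ℝ) * Real.log lam ≤ ((r:ℝ) + 1) * K := by
        rw [hKdef]
        have hcr : (0:ℝ) ≤ (r:ℝ) := Nat.cast_nonneg r
        linarith [mul_nonneg hcr hlog2.le, hloglam.le]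
      linarith [l3, l4 ▸ l3]
    have hmr1le : mr1 ≤ 2 * lam ^ (r+1) := by
      have := hmle (r+1); have := hpow1 (r+1); linarith
    set A : ℝ := c⁻¹ * (2 * lam) * K with hAdef
    have hA0 : 0 ≤ A := by rw [hAdef]; positivity
    have hr0' : (0:ℝ) ≤ (r:ℝ) := Nat.cast_nonneg r
    have hR1 : (1:ℝ) ≤ (r:ℝ) + 1 := by linarith
    have hR0 : (0:ℝ) ≤ (r:ℝ) + 1 := by linarith
    have hlp0 : (0:ℝ) ≤ lam ^ r := by positivity
    have hxle : x ≤ A * (lam ^ r * ((r:ℝ) + 1)) := by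
      have step : x ≤ c⁻¹ * (2 * lam ^ (r+1)) * (((r:ℝ) + 1) * K) := by
        rw [hxdef]
        have h0c : (0:ℝ) ≤ c⁻¹ := by positivity
        have e1 : c⁻¹ * mr1 ≤ c⁻¹ * (2 * lam ^ (r+1)) :=
          mul_le_mul_of_nonneg_left hmr1le h0c
        have e2 : 0 ≤ c⁻¹ * mr1 := mul_nonneg h0c hmr10
        exact mul_le_mul e1 hL_le hL0.le (by positivity)
      calc x ≤ c⁻¹ * (2 * lam ^ (r+1)) * (((r:ℝ) + 1) * K) := step
        _ = A * (lam ^ r * ((r:ℝ) + 1)) := by rw [hAdef, pow_succ]; ring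
    have hpowγ : (lam ^ r) ^ (γ/2) = q ^ r * lam ^ r := by
      rw [hqdef, ← Real.rpow_natCast lam r, ← Real.rpow_mul hlam0.le,
        ← Real.rpow_natCast (lam ^ (γ/2 - 1) : ℝ) r, ← Real.rpow_mul hlam0.le,
        ← Real.rpow_add hlam0]
      ring_nf
    have hrpow : ((r:ℝ) + 1) ^ (γ/2) ≤ (r:ℝ) + 1 := by
      calc ((r:ℝ) + 1) ^ (γ/2) ≤ ((r:ℝ) + 1) ^ (1:ℝ) :=
            Real.rpow_le_rpow_of_exponent_le hR1 (by linarith)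
        _ = (r:ℝ) + 1 := Real.rpow_one _
    have hbt : b * t ^ γ ≤ ε * lam ^ r := by
      have s2 : (A * (lam ^ r * ((r:ℝ) + 1))) ^ (γ/2)
          = A ^ (γ/2) * ((lam ^ r) ^ (γ/2) * ((r:ℝ) + 1) ^ (γ/2)) := by
        rw [Real.mul_rpow hA0 (mul_nonneg hlp0 hR0),
          Real.mul_rpow hlp0 hR0]
      have s3 : (lam ^ r) ^ (γ/2) * ((r:ℝ) + 1) ^ (γ/2) ≤ q ^ r * lam ^ r * ((r:ℝ) + 1) := by
        rw [hpowγ]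
        exact mul_le_mul_of_nonneg_left hrpow (by positivity)
      have hAg0 : 0 ≤ A ^ (γ/2) := Real.rpow_nonneg hA0 _
      calc b * t ^ γ = b * x ^ (γ/2) := by rw [htγ]
        _ ≤ b * ((A * (lam ^ r * ((r:ℝ) + 1))) ^ (γ/2)) :=
            mul_le_mul_of_nonneg_left (Real.rpow_le_rpow hx0 hxle (by linarith)) hb
        _ = b * (A ^ (γ/2) * ((lam ^ r) ^ (γ/2) * ((r:ℝ) + 1) ^ (γ/2))) := by rw [s2]
        _ ≤ b * (A ^ (γ/2) * (q ^ r * lam ^ r * ((r:ℝ) + 1))) :=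
            mul_le_mul_of_nonneg_left (mul_le_mul_of_nonneg_left s3 hAg0) hb
        _ = D * (((r:ℝ) + 1) * q ^ r) * lam ^ r := by rw [hDdef, hAdef]; ring
        _ ≤ ε * lam ^ r := mul_le_mul_of_nonneg_right hD3 hlp0
    -- denominator bound
    have hB : β * (mr + b * t ^ γ) ≤ mr1 := by
      have h5 : β * (mr + b * t ^ γ) ≤ β * (lam ^ r + 1 + ε * lam ^ r) := by
        have := hmle r
        have hbt0 : 0 ≤ b * t ^ γ := mul_nonneg hb (Real.rpow_nonneg ht0 _)
        apply mul_le_mul_of_nonneg_left _ hβ0.le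
        linarith
      have h6 : β * (lam ^ r + 1 + ε * lam ^ r) ≤ lam ^ (r+1) := by
        rw [pow_succ]
        have e1 : β * ε * lam ^ r = (lam - β) / 2 * lam ^ r := by rw [hβε]
        linarith [e1, h2]
      calc β * (mr + b * t ^ γ) ≤ lam ^ (r+1) := by linarith
        _ ≤ mr1 := hmge (r+1)
    -- apply hmax
    have happ := hmax ⌈lam ^ r⌉₊ (hm1 r) t ht0
    refine le_trans happ (ENNReal.ofReal_le_ofReal ?_)
    have ht2 : t ^ 2 = x := Real.sq_sqrt hx0
    have hct2 : c * t ^ 2 = mr1 * L := by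
      rw [ht2, hxdef]; field_simp
    have hbtγ0 : 0 ≤ b * t ^ γ := mul_nonneg hb (Real.rpow_nonneg ht0 _)
    have hdenom : 0 < mr + b * t ^ γ := by linarith
    have hquot : β * L ≤ c * t ^ 2 / (mr + b * t ^ γ) := by
      rw [hct2, le_div_iff₀ hdenom]
      linarith [mul_le_mul_of_nonneg_left hB hL0.le]
    have hexp : Real.exp (-(c * t ^ 2) / (mr + b * t ^ γ)) ≤ Real.exp (-(β * L)) := by
      rw [Real.exp_le_exp, neg_div]
      exact neg_le_neg hquot
    have hexp2 : Real.exp (-(β * L)) = Real.log mr ^ (-β) := by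
      rw [Real.rpow_def_of_pos (by linarith : 0 < Real.log mr)]
      rw [hLdef]; ring_nf
    have hlogmr_ge : (r:ℝ) * Real.log lam ≤ Real.log mr := by
      have := Real.log_le_log (by positivity) (hmge r)
      rwa [Real.log_pow] at this
    have hr0 : (1:ℝ) ≤ (r:ℝ) := by exact_mod_cast hr1
    have hrpos : 0 < (r:ℝ) * Real.log lam :=
      mul_pos (lt_of_lt_of_le one_pos hr0) hloglam
    have hrb : Real.log mr ^ (-β) ≤ ((r:ℝ) * Real.log lam) ^ (-β) :=
      Real.rpow_le_rpow_of_nonpos hrpos hlogmr_ge (by linarith)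
    have hsp : ((r:ℝ) * Real.log lam) ^ (-β) = (r:ℝ) ^ (-β) * Real.log lam ^ (-β) :=
      Real.mul_rpow (by positivity) hloglam.le
    calc C * Real.exp (-(c * t ^ 2) / (↑⌈lam ^ r⌉₊ + b * t ^ γ))
        ≤ C * (Real.log lam ^ (-β) * (r:ℝ) ^ (-β)) := by
          apply mul_le_mul_of_nonneg_left _ hC.le
          rw [← hmrdef]
          calc Real.exp (-(c * t ^ 2) / (mr + b * t ^ γ)) ≤ Real.exp (-(β * L)) := hexp
            _ = Real.log mr ^ (-β) := hexp2
            _ ≤ ((r:ℝ) * Real.log lam) ^ (-β) := hrb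
            _ = Real.log lam ^ (-β) * (r:ℝ) ^ (-β) := by rw [hsp]; ring
      _ = C * (Real.log lam ^ (-β) * (r:ℝ) ^ (-β)) := rfl
  -- extract r₀
  obtain ⟨N, hN⟩ := eventually_atTop.mp key
  refine ⟨max N 1, le_max_right _ _, (hN _ (le_max_left _ _)).1, ?_⟩
  set r₀ : ℕ := max N 1 with hr₀def
  have hterm : ∀ r : ℕ,
      P {ω | Real.sqrt (c⁻¹ * (⌈lam ^ (r₀ + r + 1)⌉₊ : ℝ) *
              Real.log (Real.log (⌈lam ^ (r₀ + r)⌉₊ : ℝ)))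
            < (Finset.Icc 1 ⌈lam ^ (r₀ + r)⌉₊).sup'
                (Finset.nonempty_Icc.mpr
                  (Nat.one_le_ceil_iff.mpr (pow_pos (lt_trans one_pos hlam) _)))
                (fun j => |∑ i ∈ Finset.Icc 1 j, X i ω|)}
        ≤ ENNReal.ofReal (C * (Real.log lam ^ (-β) * ((r₀ + r : ℕ):ℝ) ^ (-β))) := by
    intro r
    exact (hN (r₀ + r) (le_trans (le_max_left _ _) (Nat.le_add_right r₀ r))).2
  have h1s : Summable (fun n : ℕ => ((n:ℝ)) ^ (-β)) :=
    Real.summable_nat_rpow.mpr (by linarith)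
  have hGsum : Summable (fun r : ℕ => C * (Real.log lam ^ (-β) * ((r₀ + r : ℕ):ℝ) ^ (-β))) := by
    have h2 := (h1s.comp_injective (add_right_injective r₀)).mul_left
      (C * Real.log lam ^ (-β))
    simpa [Function.comp, mul_assoc] using h2
  have hG0 : ∀ r : ℕ, 0 ≤ C * (Real.log lam ^ (-β) * ((r₀ + r : ℕ):ℝ) ^ (-β)) := fun r =>
    mul_nonneg hC.le (mul_nonneg (Real.rpow_nonneg hloglam.le _)
      (Real.rpow_nonneg (Nat.cast_nonneg _) _))
  refine lt_of_le_of_lt (ENNReal.tsum_le_tsum hterm) ?_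
  rw [← ENNReal.ofReal_tsum_of_nonneg hG0 hGsum]
  exact ENNReal.ofReal_lt_top
end

section
/- Let X_1, X_2, … be a sequence of real-valued random variables and suppose there are constants C > 0, c > 0, b ≥ 0 and γ ∈ (0,2) such that for all integers n ≥ 1 and all reals t ≥ 0, P{M(1,n) > t} ≤ C·exp(−c t² / (n + b t^γ)). Fix λ > 1 and set m_r = ⌈λ^r⌉ for r = 1, 2, …. Then with probability 1, limsup_{r→∞} M(1, m_r) / √(m_r · log log m_r) ≤ √(λ / c). -/
open MeasureTheory Finset Filter

noncomputable def kx (lam : ℝ) (r : ℕ) : ℝ := (⌈lam ^ r⌉₊ : ℝ)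
noncomputable def kLL (lam : ℝ) (r : ℕ) : ℝ := Real.log (Real.log (kx lam r))

lemma kx_ge (lam : ℝ) (r : ℕ) : lam ^ r ≤ kx lam r := Nat.le_ceil _

lemma kx_tendsto {lam : ℝ} (hlam : 1 < lam) : Tendsto (kx lam) atTop atTop :=
  tendsto_atTop_mono (kx_ge lam) (tendsto_pow_atTop_atTop_of_one_lt hlam)

lemma kx_pos {lam : ℝ} (hlam : 1 < lam) (r : ℕ) : 0 < kx lam r :=
  lt_of_lt_of_le (pow_pos (lt_trans one_pos hlam) r) (kx_ge lam r)

lemma kLL_lower {lam : ℝ} (hlam : 1 < lam) {r : ℕ} (hr : 1 ≤ r) :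
    Real.log r + Real.log (Real.log lam) ≤ kLL lam r := by
  have hlam0 : (0:ℝ) < lam := lt_trans one_pos hlam
  have hll : 0 < Real.log lam := Real.log_pos hlam
  have hr0 : (0:ℝ) < (r:ℝ) := by exact_mod_cast hr
  have h2 : (r:ℝ) * Real.log lam ≤ Real.log (kx lam r) := by
    have := Real.log_le_log (pow_pos hlam0 r) (kx_ge lam r)
    rwa [Real.log_pow] at this
  have h3 : 0 < (r:ℝ) * Real.log lam := mul_pos hr0 hll
  have h4 : Real.log ((r:ℝ) * Real.log lam) ≤ kLL lam r := Real.log_le_log h3 h2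
  rwa [Real.log_mul (ne_of_gt hr0) (ne_of_gt hll)] at h4

lemma log_nat_tendsto : Tendsto (fun r : ℕ => Real.log r) atTop atTop :=
  Real.tendsto_log_atTop.comp tendsto_natCast_atTop_atTop

lemma kLL_event_ge {lam : ℝ} (hlam : 1 < lam) {ν : ℝ} (hν0 : 0 < ν) (hν1 : ν < 1) :
    ∀ᶠ r : ℕ in atTop, 1 ≤ kLL lam r ∧ ν * Real.log r ≤ kLL lam r := by
  have h1 : Tendsto (fun r : ℕ => (1 - ν) * Real.log r + Real.log (Real.log lam)) atTop atTop :=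
    ((log_nat_tendsto.const_mul_atTop (by linarith)).atTop_add tendsto_const_nhds)
  have h2 : Tendsto (fun r : ℕ => ν * Real.log r) atTop atTop :=
    log_nat_tendsto.const_mul_atTop hν0
  filter_upwards [h1.eventually_ge_atTop 0, h2.eventually_ge_atTop 1,
    eventually_ge_atTop 1] with r hr1 hr2 hr3
  have hlow := kLL_lower hlam hr3
  constructor
  · nlinarith
  · nlinarith

lemma kLL_rpow_event {lam : ℝ} (hlam : 1 < lam) {γ : ℝ} (hγ0 : 0 < γ) (hγ2 : γ < 2)
    {K δ : ℝ} (hK : 0 < K) (hδ : 0 < δ) :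
    ∀ᶠ r : ℕ in atTop, K * (kx lam r * kLL lam r) ^ (γ/2) ≤ δ * kx lam r := by
  set β : ℝ := (2 - γ)/4 with hβ
  have hβ0 : 0 < β := by rw [hβ]; linarith
  set e : ℝ := (1+β)*(γ/2) with he
  have he1 : e < 1 := by rw [he, hβ]; nlinarith
  set K' : ℝ := K / β ^ (γ/2) with hK'def
  have hK' : 0 < K' := div_pos hK (Real.rpow_pos_of_pos hβ0 _)
  have ht : Tendsto (fun r : ℕ => kx lam r ^ (e-1)) atTop (nhds 0) := by
    have h1 := (tendsto_rpow_neg_atTop (by linarith : 0 < 1 - e)).comp (kx_tendsto hlam)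
    simpa [Function.comp_def, neg_sub] using h1
  have hev : ∀ᶠ r : ℕ in atTop, K' * kx lam r ^ (e-1) ≤ δ := by
    have h2 : Tendsto (fun r : ℕ => K' * kx lam r ^ (e-1)) atTop (nhds (K' * 0)) :=
      ht.const_mul K'
    rw [mul_zero] at h2
    exact h2.eventually (eventually_le_nhds hδ)
  filter_upwards [hev, (kx_tendsto hlam).eventually_ge_atTop 2,
    kLL_event_ge hlam (by norm_num : (0:ℝ) < 1/2) (by norm_num)] with r hr1 hr2 hr3
  obtain ⟨hLL1, -⟩ := hr3
  set x := kx lam r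
  set LL := kLL lam r
  have hx0 : (0:ℝ) < x := by linarith
  have hx1 : (1:ℝ) < x := by linarith
  have hlogx : 0 < Real.log x := Real.log_pos hx1
  have hLLlog : LL ≤ Real.log x :=
    le_trans (Real.log_le_sub_one_of_pos hlogx) (by linarith)
  have hlogβ : Real.log x ≤ x ^ β / β := Real.log_le_rpow_div hx0.le hβ0
  have hxLL : x * LL ≤ x ^ (1+β) / β := by
    have h4 : x * LL ≤ x * (x ^ β / β) :=
      mul_le_mul_of_nonneg_left (hLLlog.trans hlogβ) hx0.le
    have h5 : x * (x ^ β / β) = x ^ (1+β) / β := by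
      rw [Real.rpow_add hx0, Real.rpow_one]; ring
    linarith
  have h5 : (x * LL) ^ (γ/2) ≤ (x ^ (1+β) / β) ^ (γ/2) :=
    Real.rpow_le_rpow (mul_nonneg hx0.le (by linarith)) hxLL (by positivity)
  have h6 : (x ^ (1+β) / β) ^ (γ/2) = x ^ e / β ^ (γ/2) := by
    rw [Real.div_rpow (Real.rpow_nonneg hx0.le _) hβ0.le, ← Real.rpow_mul hx0.le]
  have h7 : K * (x * LL) ^ (γ/2) ≤ K' * x ^ e := by
    have h9 := mul_le_mul_of_nonneg_left (h5.trans_eq h6) hK.le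
    have h10 : K * (x ^ e / β ^ (γ/2)) = K' * x ^ e := by rw [hK'def]; ring
    linarith
  have h8 : K' * x ^ e = (K' * x ^ (e-1)) * x := by
    rw [mul_assoc, ← Real.rpow_add_one (ne_of_gt hx0) (e-1)]
    ring_nf
  calc K * (x * LL) ^ (γ/2) ≤ K' * x ^ e := h7
    _ = (K' * x ^ (e-1)) * x := h8
    _ ≤ δ * x := mul_le_mul_of_nonneg_right hr1 hx0.le

set_option maxHeartbeats 1000000 in
lemma km_aux {Ω : Type*} [MeasurableSpace Ω] (P : Measure Ω) [IsProbabilityMeasure P]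
    (X : ℕ → Ω → ℝ) (C c b γ : ℝ)
    (hC : 0 < C) (hc : 0 < c) (hb : 0 ≤ b) (hγ : γ ∈ Set.Ioo (0 : ℝ) 2)
    (hmax : ∀ n : ℕ, ∀ hn : 1 ≤ n, ∀ t : ℝ, 0 ≤ t →
      P {ω | t < (Finset.Icc 1 n).sup' (Finset.nonempty_Icc.mpr hn)
            (fun j => |∑ i ∈ Finset.Icc 1 j, X i ω|)}
        ≤ ENNReal.ofReal (C * Real.exp (-(c * t ^ 2) / (n + b * t ^ γ))))
    (lam : ℝ) (hlam : 1 < lam) (ε : ℝ) (hε : 0 < ε) :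
    ∀ᵐ ω ∂P, ∀ᶠ r : ℕ in atTop,
      ((Finset.Icc 1 ⌈lam ^ r⌉₊).sup'
          (Finset.nonempty_Icc.mpr (Nat.one_le_ceil_iff.mpr (pow_pos (lt_trans one_pos hlam) r)))
          (fun j => |∑ i ∈ Finset.Icc 1 j, X i ω|)
        ≤ (Real.sqrt (lam / c) + ε) * Real.sqrt (kx lam r * kLL lam r))
      ∧ 0 < Real.sqrt (kx lam r * kLL lam r) := by
  have hlam0 : (0:ℝ) < lam := lt_trans one_pos hlam
  obtain ⟨hγ0, hγ2⟩ := hγ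
  obtain ⟨ρ, hρ0, hρgt, hρeq⟩ :
      ∃ ρ : ℝ, 0 < ρ ∧ lam < c * ρ ^ 2 ∧ ρ = Real.sqrt (lam / c) + ε := by
    refine ⟨Real.sqrt (lam / c) + ε, ?_, ?_, rfl⟩
    · have := Real.sqrt_nonneg (lam / c); linarith
    · have hL0 : 0 ≤ Real.sqrt (lam / c) := Real.sqrt_nonneg _
      have hL2 : c * Real.sqrt (lam / c) ^ 2 = lam := by
        rw [Real.sq_sqrt (by positivity)]; field_simp
      nlinarith [mul_pos hc (mul_pos hε hε),
        mul_nonneg (mul_nonneg hc.le hL0) hε.le]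
  have hA1 : (1:ℝ) < c * ρ ^ 2 := lt_trans hlam hρgt
  obtain ⟨A', hA'1, hA'lt⟩ :
      ∃ A' : ℝ, 1 < A' ∧ A' < c * ρ ^ 2 := ⟨(1 + c * ρ ^ 2) / 2, by linarith, by linarith⟩
  have hA'0 : (0:ℝ) < A' := by linarith
  obtain ⟨ν, hν0, hν1, hν2⟩ :
      ∃ ν : ℝ, 0 < ν ∧ ν < 1 ∧ A' = (c * ρ ^ 2) * ν ^ 2 := by
    refine ⟨Real.sqrt (A' / (c * ρ ^ 2)), Real.sqrt_pos.mpr (by positivity), ?_, ?_⟩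
    · have h1 : A' / (c * ρ ^ 2) < 1 := (div_lt_one (by positivity)).mpr hA'lt
      have h2 := Real.sq_sqrt (show (0:ℝ) ≤ A' / (c * ρ ^ 2) by positivity)
      nlinarith [Real.sqrt_nonneg (A' / (c * ρ ^ 2))]
    · have h2 := Real.sq_sqrt (show (0:ℝ) ≤ A' / (c * ρ ^ 2) by positivity)
      rw [h2]; field_simp
  obtain ⟨δ, hδ0, hδeq⟩ : ∃ δ : ℝ, 0 < δ ∧ ν * (1 + δ) = 1 := by
    refine ⟨1 / ν - 1, ?_, ?_⟩
    · have h1 : ν * (1 / ν) = 1 := mul_one_div_cancel hν0.ne'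
      nlinarith
    · field_simp; ring
  have hK : 0 < (b + 1) * ρ ^ γ := mul_pos (by linarith) (Real.rpow_pos_of_pos hρ0 _)
  set t : ℕ → ℝ := fun r => ρ * Real.sqrt (kx lam r * kLL lam r) with htdef
  have ht0 : ∀ r, 0 ≤ t r := fun r => mul_nonneg hρ0.le (Real.sqrt_nonneg _)
  set s : ℕ → Set Ω := fun r => {ω | t r <
      (Finset.Icc 1 ⌈lam ^ r⌉₊).sup'
        (Finset.nonempty_Icc.mpr (Nat.one_le_ceil_iff.mpr (pow_pos hlam0 r)))
        (fun j => |∑ i ∈ Finset.Icc 1 j, X i ω|)} with hsdef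
  have hgood : ∀ᶠ r : ℕ in atTop, P (s r) ≤ ENNReal.ofReal (C * (r:ℝ) ^ (-A')) := by
    filter_upwards [kLL_event_ge hlam hν0 hν1, kLL_rpow_event hlam hγ0 hγ2 hK hδ0,
      eventually_ge_atTop 3] with r hr1 hr2 hr3
    obtain ⟨hLL1, hνlog⟩ := hr1
    have hx0 : 0 < kx lam r := kx_pos hlam r
    have hxLL0 : 0 ≤ kx lam r * kLL lam r := mul_nonneg hx0.le (by linarith)
    have ht2 : t r ^ 2 = ρ ^ 2 * (kx lam r * kLL lam r) := by
      rw [htdef]; rw [mul_pow, Real.sq_sqrt hxLL0]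
    have htγ : t r ^ γ = ρ ^ γ * (kx lam r * kLL lam r) ^ (γ / 2) := by
      rw [htdef, Real.mul_rpow hρ0.le (Real.sqrt_nonneg _)]
      congr 1
      rw [Real.sqrt_eq_rpow, ← Real.rpow_mul hxLL0, show (1/2) * γ = γ/2 by ring]
    have hbt : b * t r ^ γ ≤ δ * kx lam r := by
      rw [htγ]
      have h3 : 0 ≤ (kx lam r * kLL lam r) ^ (γ / 2) := Real.rpow_nonneg hxLL0 _
      have h2 : b * ρ ^ γ ≤ (b + 1) * ρ ^ γ :=
        mul_le_mul_of_nonneg_right (by linarith) (Real.rpow_nonneg hρ0.le _)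
      nlinarith [hr2]
    have hmr : 1 ≤ ⌈lam ^ r⌉₊ := Nat.one_le_ceil_iff.mpr (pow_pos hlam0 r)
    have hP := hmax ⌈lam ^ r⌉₊ hmr (t r) (ht0 r)
    have hr3' : (3:ℝ) ≤ (r:ℝ) := by exact_mod_cast hr3
    have hr0 : (0:ℝ) < (r:ℝ) := by linarith
    have hlogr0 : 0 ≤ Real.log r := Real.log_nonneg (by linarith)
    have hbtγ0 : 0 ≤ b * t r ^ γ := mul_nonneg hb (Real.rpow_nonneg (ht0 r) _)
    have hden0 : 0 < kx lam r + b * t r ^ γ := by linarith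
    have hkey : A' * Real.log r * (kx lam r + b * t r ^ γ) ≤ c * t r ^ 2 := by
      have e1 : A' * Real.log r * (kx lam r + b * t r ^ γ)
          ≤ A' * Real.log r * ((1 + δ) * kx lam r) := by
        apply mul_le_mul_of_nonneg_left _ (by positivity)
        nlinarith
      have e2 : A' * Real.log r * ((1 + δ) * kx lam r)
          = (c * ρ ^ 2) * (ν * Real.log r) * kx lam r * (ν * (1 + δ)) := by
        rw [hν2]; ring
      have e3 : (c * ρ ^ 2) * (ν * Real.log r) * kx lam r * (ν * (1 + δ))
          = (c * ρ ^ 2) * (ν * Real.log r) * kx lam r := by rw [hδeq]; ring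
      have e4 : (c * ρ ^ 2) * (ν * Real.log r) * kx lam r
          ≤ (c * ρ ^ 2) * kLL lam r * kx lam r := by
        apply mul_le_mul_of_nonneg_right _ hx0.le
        exact mul_le_mul_of_nonneg_left hνlog (by positivity)
      have e5 : c * t r ^ 2 = (c * ρ ^ 2) * kLL lam r * kx lam r := by
        rw [ht2]; ring
      linarith
    have hexp : C * Real.exp (-(c * t r ^ 2) / (kx lam r + b * t r ^ γ))
        ≤ C * (r:ℝ) ^ (-A') := by
      apply mul_le_mul_of_nonneg_left _ hC.le
      rw [Real.rpow_def_of_pos hr0]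
      apply Real.exp_le_exp.mpr
      have h6 : -(c * t r ^ 2) / (kx lam r + b * t r ^ γ) ≤ -(A' * Real.log r) := by
        rw [neg_div, neg_le_neg_iff]
        exact (le_div_iff₀ hden0).mpr hkey
      exact h6.trans_eq (by ring)
    exact le_trans hP (ENNReal.ofReal_le_ofReal hexp)
  obtain ⟨N, hN⟩ := eventually_atTop.mp hgood
  have hsum : Summable (fun k : ℕ => C * ((k + N : ℕ):ℝ) ^ (-A')) := by
    have h1 : Summable (fun n : ℕ => C * (n:ℝ) ^ (-A')) :=
      (Real.summable_nat_rpow.mpr (by linarith)).mul_left C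
    exact (summable_nat_add_iff N).mpr h1
  have htsum : (∑' k, P (s (k + N))) ≠ ⊤ := by
    have hle : (∑' k, P (s (k + N))) ≤ ∑' k, ENNReal.ofReal (C * ((k + N : ℕ):ℝ) ^ (-A')) :=
      ENNReal.tsum_le_tsum (fun k => hN (k + N) (Nat.le_add_left N k))
    have heq : (∑' k, ENNReal.ofReal (C * ((k + N : ℕ):ℝ) ^ (-A')))
        = ENNReal.ofReal (∑' k, C * ((k + N : ℕ):ℝ) ^ (-A')) :=
      (ENNReal.ofReal_tsum_of_nonneg (fun k => by positivity) hsum).symm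
    exact ne_top_of_le_ne_top (by rw [heq]; exact ENNReal.ofReal_ne_top) hle
  filter_upwards [ae_eventually_notMem htsum] with ω hω
  have hω' : ∀ᶠ r : ℕ in atTop, ω ∉ s r := by
    obtain ⟨K₀, hK₀⟩ := eventually_atTop.mp hω
    rw [eventually_atTop]
    refine ⟨K₀ + N, fun r hr => ?_⟩
    have h1 : K₀ ≤ r - N := le_tsub_of_add_le_right hr
    have h2 := hK₀ (r - N) h1
    rwa [Nat.sub_add_cancel (le_trans (Nat.le_add_left N K₀) hr)] at h2
  filter_upwards [hω', kLL_event_ge hlam hν0 hν1] with r hr1 hr2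
  have hD : 0 < Real.sqrt (kx lam r * kLL lam r) :=
    Real.sqrt_pos.mpr (mul_pos (kx_pos hlam r) (by linarith [hr2.1]))
  refine ⟨?_, hD⟩
  simp only [hsdef, Set.mem_setOf_eq, not_lt] at hr1
  rw [← hρeq]
  exact hr1

/-- Inequality (10) in the proof of Corollary 1 of Kevei–Mason: if the maxima
`M(1,n) = max_{1 ≤ j ≤ n} |S(1,j)|` satisfy
`P{M(1,n) > t} ≤ C · exp(−c t² / (n + b t^γ))`, then for `λ > 1` and
`m_r = ⌈λ^r⌉`, with probability 1,
`limsup_{r→∞} M(1, m_r) / √(m_r log log m_r) ≤ √(λ/c)`. -/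
theorem limsup_along_subsequence
    {Ω : Type*} [MeasurableSpace Ω] (P : Measure Ω) [IsProbabilityMeasure P]
    (X : ℕ → Ω → ℝ) (C c b γ : ℝ)
    (hC : 0 < C) (hc : 0 < c) (hb : 0 ≤ b) (hγ : γ ∈ Set.Ioo (0 : ℝ) 2)
    (hmax : ∀ n : ℕ, ∀ hn : 1 ≤ n, ∀ t : ℝ, 0 ≤ t →
      P {ω | t < (Finset.Icc 1 n).sup' (Finset.nonempty_Icc.mpr hn)
            (fun j => |∑ i ∈ Finset.Icc 1 j, X i ω|)}
        ≤ ENNReal.ofReal (C * Real.exp (-(c * t ^ 2) / (n + b * t ^ γ))))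
    (lam : ℝ) (hlam : 1 < lam) :
    ∀ᵐ ω ∂P,
      Filter.limsup
          (fun r : ℕ =>
            (((Finset.Icc 1 ⌈lam ^ r⌉₊).sup'
                  (Finset.nonempty_Icc.mpr
                    (Nat.one_le_ceil_iff.mpr (pow_pos (lt_trans one_pos hlam) _)))
                  (fun j => |∑ i ∈ Finset.Icc 1 j, X i ω|) /
                Real.sqrt ((⌈lam ^ r⌉₊ : ℝ) *
                  Real.log (Real.log (⌈lam ^ r⌉₊ : ℝ))) : ℝ) : EReal))
          Filter.atTop
        ≤ ((Real.sqrt (lam / c) : ℝ) : EReal) := by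
  have key : ∀ᵐ ω ∂P, ∀ n : ℕ, ∀ᶠ r : ℕ in atTop,
      ((Finset.Icc 1 ⌈lam ^ r⌉₊).sup'
          (Finset.nonempty_Icc.mpr (Nat.one_le_ceil_iff.mpr (pow_pos (lt_trans one_pos hlam) r)))
          (fun j => |∑ i ∈ Finset.Icc 1 j, X i ω|)
        ≤ (Real.sqrt (lam / c) + 1/((n:ℝ)+1)) * Real.sqrt (kx lam r * kLL lam r))
      ∧ 0 < Real.sqrt (kx lam r * kLL lam r) :=
    ae_all_iff.mpr (fun n =>
      km_aux P X C c b γ hC hc hb hγ hmax lam hlam (1/((n:ℝ)+1)) (by positivity))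
  filter_upwards [key] with ω hω
  have hlim : ∀ n : ℕ,
      Filter.limsup
          (fun r : ℕ =>
            (((Finset.Icc 1 ⌈lam ^ r⌉₊).sup'
                  (Finset.nonempty_Icc.mpr
                    (Nat.one_le_ceil_iff.mpr (pow_pos (lt_trans one_pos hlam) _)))
                  (fun j => |∑ i ∈ Finset.Icc 1 j, X i ω|) /
                Real.sqrt ((⌈lam ^ r⌉₊ : ℝ) *
                  Real.log (Real.log (⌈lam ^ r⌉₊ : ℝ))) : ℝ) : EReal))
          Filter.atTop
        ≤ ((Real.sqrt (lam / c) + 1/((n:ℝ)+1) : ℝ) : EReal) := by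
    intro n
    apply Filter.limsup_le_of_le (by isBoundedDefault)
    filter_upwards [hω n] with r hr
    obtain ⟨h1, h2⟩ := hr
    simp only [kx, kLL] at h1 h2
    exact EReal.coe_le_coe_iff.mpr ((div_le_iff₀ h2).mpr h1)
  by_contra hcon
  push_neg at hcon
  obtain ⟨z, hz1, hz2⟩ := EReal.lt_iff_exists_real_btwn.mp hcon
  have hzL : Real.sqrt (lam / c) < z := EReal.coe_lt_coe_iff.mp hz1
  obtain ⟨n, hn⟩ := exists_nat_one_div_lt (show (0:ℝ) < z - Real.sqrt (lam / c) by linarith)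
  have h3 := hlim n
  have hlt : ((Real.sqrt (lam / c) + 1/((n:ℝ)+1) : ℝ) : EReal) < (z : EReal) :=
    EReal.coe_lt_coe_iff.mpr (by linarith)
  exact lt_irrefl _ ((h3.trans_lt hlt).trans hz2)
end
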